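/- Up to the action of the group Aff(ℤ²) of lattice-preserving affine automorphisms of ℝ², the quadrangle with vertices (1,0), (0,1), (1,2), (2,0) and the unit square with vertices (0,0), (1,0), (1,1), (0,1) scaled appropriately are the only lattice quadrangles with exactly one interior integral point and all four edges of lattice length 1. -/

import Mathlib

/-- Embedding of the integer lattice into the real plane. -/
def toR (p : ℤ × ℤ) : ℝ × ℝ := ((p.1 : ℝ), (p.2 : ℝ))

/-- `T` is a lattice-preserving affine automorphism of ℤ² (an element of Aff(ℤ²)). -/
def IsUnimodularAffine (T : ℤ × ℤ → ℤ × ℤ) : Prop :=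
  ∃ a b c d e f : ℤ, (a * d - b * c = 1 ∨ a * d - b * c = -1) ∧
    ∀ p : ℤ × ℤ, T p = (a * p.1 + b * p.2 + e, c * p.1 + d * p.2 + f)

/-- Two finite lattice point configurations are equivalent under Aff(ℤ²). -/
def LatticeEquiv (Q Q' : Finset (ℤ × ℤ)) : Prop :=
  ∃ T : ℤ × ℤ → ℤ × ℤ, IsUnimodularAffine T ∧ Q.image T = Q'

/-- The convex hull of a lattice point configuration, in ℝ². -/
noncomputable def hullR (Q : Finset (ℤ × ℤ)) : Set (ℝ × ℝ) :=
  convexHull ℝ (toR '' ↑Q)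

/-- `Q` is the vertex set of a lattice polygon with `n` vertices, all of whose boundary
lattice points are vertices (i.e. all edges have lattice length 1) and with exactly `i`
interior lattice points. -/
def IsLatticePolygonPrimitiveEdges (Q : Finset (ℤ × ℤ)) (n i : ℕ) : Prop :=
  Q.card = n ∧
  (∀ p ∈ Q, toR p ∈ Set.extremePoints ℝ (hullR Q)) ∧
  (∀ q : ℤ × ℤ, toR q ∈ frontier (hullR Q) → q ∈ Q) ∧
  Set.ncard {q : ℤ × ℤ | toR q ∈ interior (hullR Q)} = i

/-- The quadrangle conv{(1,0),(0,1),(1,2),(2,0)} with a single interior point (1,1). -/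
def Q1 : Finset (ℤ × ℤ) := {(1, 0), (0, 1), (1, 2), (2, 0)}

/-- The parallelogram conv{(0,0),(1,1),(0,2),(-1,1)} of area 2 with a single interior
point (0,1). -/
def Q2 : Finset (ℤ × ℤ) := {(0, 0), (1, 1), (0, 2), (-1, 1)}



lemma toR_inj : Function.Injective toR := by
  intro p q h
  have h1 : (p.1 : ℝ) = q.1 := congrArg Prod.fst h
  have h2 : (p.2 : ℝ) = q.2 := congrArg Prod.snd h
  exact Prod.ext (by exact_mod_cast h1) (by exact_mod_cast h2)

lemma convex_hullR (Q : Finset (ℤ × ℤ)) : Convex ℝ (hullR Q) := convex_convexHull ℝ _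

lemma isClosed_hullR (Q : Finset (ℤ × ℤ)) : IsClosed (hullR Q) := by
  have : (toR '' ↑Q).Finite := (Q.finite_toSet.image toR)
  exact this.isClosed_convexHull (𝕜 := ℝ)

lemma mem_hullR_of_mem {Q : Finset (ℤ × ℤ)} {p : ℤ × ℤ} (h : p ∈ Q) : toR p ∈ hullR Q :=
  subset_convexHull ℝ _ ⟨p, by simpa using h, rfl⟩

/-- convex combination of three points -/
lemma combo3_mem {s : Set (ℝ × ℝ)} (hs : Convex ℝ s) {x y z : ℝ × ℝ}
    (hx : x ∈ s) (hy : y ∈ s) (hz : z ∈ s) {a b c : ℝ}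
    (ha : 0 ≤ a) (hb : 0 ≤ b) (hc : 0 ≤ c) (habc : a + b + c = 1) :
    a • x + b • y + c • z ∈ s := by
  have := hs.sum_mem (t := (Finset.univ : Finset (Fin 3))) (w := ![a, b, c]) (z := ![x, y, z])
    (by intro i _; fin_cases i <;> assumption)
    (by simp [Fin.sum_univ_three]; linarith)
    (by intro i _; fin_cases i <;> assumption)
  simpa [Fin.sum_univ_three, add_assoc] using this

lemma combo4_mem {s : Set (ℝ × ℝ)} (hs : Convex ℝ s) {x y z w : ℝ × ℝ}
    (hx : x ∈ s) (hy : y ∈ s) (hz : z ∈ s) (hw : w ∈ s) {a b c d : ℝ}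
    (ha : 0 ≤ a) (hb : 0 ≤ b) (hc : 0 ≤ c) (hd : 0 ≤ d) (habc : a + b + c + d = 1) :
    a • x + b • y + c • z + d • w ∈ s := by
  have := hs.sum_mem (t := (Finset.univ : Finset (Fin 4))) (w := ![a, b, c, d]) (z := ![x, y, z, w])
    (by intro i _; fin_cases i <;> assumption)
    (by simp [Fin.sum_univ_four]; linarith)
    (by intro i _; fin_cases i <;> assumption)
  simpa [Fin.sum_univ_four, add_assoc] using this

lemma tight_combo {a b gy gz : ℝ} (ha : 0 < a) (hb : 0 < b) (hy : 0 ≤ gy) (hz : 0 ≤ gz)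
    (h : a * gy + b * gz = 0) : gy = 0 ∧ gz = 0 := by
  constructor <;> nlinarith

/-- A point where a supporting affine functional vanishes is not interior. -/
lemma not_mem_interior_of_affine_le (c1 c2 c0 : ℝ) (hc : c1 ≠ 0 ∨ c2 ≠ 0)
    {s : Set (ℝ × ℝ)} (hs : ∀ p ∈ s, 0 ≤ c1 * p.1 + c2 * p.2 + c0)
    {x : ℝ × ℝ} (hx : c1 * x.1 + c2 * x.2 + c0 = 0) : x ∉ interior s := by
  intro h
  rw [mem_interior_iff_mem_nhds, Metric.mem_nhds_iff] at h
  obtain ⟨ε, hε, hball⟩ := h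
  have hcc : 0 < c1 ^ 2 + c2 ^ 2 := by
    rcases hc with hc | hc <;> positivity
  have habs : 0 < |c1| + |c2| := by
    rcases hc with hc | hc
    · have := abs_pos.mpr hc; positivity
    · have := abs_pos.mpr hc; positivity
  set δ := ε / (2 * (|c1| + |c2|)) with hδdef
  have hδ : 0 < δ := by positivity
  have hmem : (x.1 - δ * c1, x.2 - δ * c2) ∈ Metric.ball x ε := by
    rw [Metric.mem_ball, Prod.dist_eq]
    have h1 : dist (x.1 - δ * c1) x.1 = δ * |c1| := by
      rw [Real.dist_eq]
      rw [show x.1 - δ * c1 - x.1 = -(δ * c1) by ring, abs_neg, abs_mul, abs_of_pos hδ]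
    have h2 : dist (x.2 - δ * c2) x.2 = δ * |c2| := by
      rw [Real.dist_eq]
      rw [show x.2 - δ * c2 - x.2 = -(δ * c2) by ring, abs_neg, abs_mul, abs_of_pos hδ]
    rw [h1, h2]
    have hδsmall : δ * (|c1| + |c2|) = ε / 2 := by
      rw [hδdef]; field_simp
    have hb1 : δ * |c1| ≤ ε / 2 := by nlinarith [abs_nonneg c1, abs_nonneg c2]
    have hb2 : δ * |c2| ≤ ε / 2 := by nlinarith [abs_nonneg c1, abs_nonneg c2]
    have : max (δ * |c1|) (δ * |c2|) ≤ ε / 2 := max_le hb1 hb2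
    calc max (δ * |c1|) (δ * |c2|) ≤ ε / 2 := this
    _ < ε := by linarith
  have := hs _ (hball hmem)
  simp only at this
  nlinarith

lemma extreme_not_interior {s : Set (ℝ × ℝ)} {x : ℝ × ℝ}
    (hx : x ∈ Set.extremePoints ℝ s) : x ∉ interior s := by
  intro h
  rw [mem_interior_iff_mem_nhds, Metric.mem_nhds_iff] at h
  obtain ⟨ε, hε, hball⟩ := h
  have hy : (x.1 + ε / 2, x.2) ∈ s := by
    apply hball
    rw [Metric.mem_ball, Prod.dist_eq, Real.dist_eq, Real.dist_eq]
    simp only [show x.1 + ε / 2 - x.1 = ε / 2 by ring, sub_self, abs_zero]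
    rw [abs_of_pos (by linarith)]
    simp only [max_def]
    split <;> linarith
  have hz : (x.1 - ε / 2, x.2) ∈ s := by
    apply hball
    rw [Metric.mem_ball, Prod.dist_eq, Real.dist_eq, Real.dist_eq]
    simp only [show x.1 - ε / 2 - x.1 = -(ε / 2) by ring, sub_self, abs_zero, abs_neg]
    rw [abs_of_pos (by linarith)]
    simp only [max_def]
    split <;> linarith
  have hseg : x ∈ openSegment ℝ (x.1 + ε / 2, x.2) (x.1 - ε / 2, x.2) := by
    refine ⟨1/2, 1/2, by norm_num, by norm_num, by norm_num, ?_⟩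
    have : ((1:ℝ)/2) • ((x.1 + ε / 2, x.2) : ℝ × ℝ) + ((1:ℝ)/2) • ((x.1 - ε / 2, x.2) : ℝ × ℝ)
        = (x.1, x.2) := by
      simp [Prod.ext_iff, Prod.smul_mk]; constructor <;> ring
    rw [this]
  obtain ⟨-, h2⟩ := mem_extremePoints.mp hx
  have := (h2 _ hy _ hz hseg).1
  have : x.1 + ε / 2 = x.1 := congrArg Prod.fst this
  linarith


def H1 : Set (ℝ × ℝ) :=
  {p | 0 ≤ p.1 + p.2 - 1 ∧ 0 ≤ p.2 ∧ 0 ≤ 4 - 2 * p.1 - p.2 ∧ 0 ≤ p.1 - p.2 + 1}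
def S1 : Set (ℝ × ℝ) :=
  {p | 0 < p.1 + p.2 - 1 ∧ 0 < p.2 ∧ 0 < 4 - 2 * p.1 - p.2 ∧ 0 < p.1 - p.2 + 1}
def H2 : Set (ℝ × ℝ) :=
  {p | 0 ≤ 2 - p.1 - p.2 ∧ 0 ≤ 2 + p.1 - p.2 ∧ 0 ≤ p.2 - p.1 ∧ 0 ≤ p.1 + p.2}
def S2 : Set (ℝ × ℝ) :=
  {p | 0 < 2 - p.1 - p.2 ∧ 0 < 2 + p.1 - p.2 ∧ 0 < p.2 - p.1 ∧ 0 < p.1 + p.2}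

lemma convex_H1 : Convex ℝ H1 := by
  intro x hx y hy a b ha hb hab
  obtain ⟨h1, h2, h3, h4⟩ := hx
  obtain ⟨k1, k2, k3, k4⟩ := hy
  refine ⟨?_, ?_, ?_, ?_⟩ <;> simp only [Prod.fst_add, Prod.snd_add, Prod.smul_fst, Prod.smul_snd, smul_eq_mul] <;> nlinarith

lemma convex_H2 : Convex ℝ H2 := by
  intro x hx y hy a b ha hb hab
  obtain ⟨h1, h2, h3, h4⟩ := hx
  obtain ⟨k1, k2, k3, k4⟩ := hy
  refine ⟨?_, ?_, ?_, ?_⟩ <;> simp only [Prod.fst_add, Prod.snd_add, Prod.smul_fst, Prod.smul_snd, smul_eq_mul] <;> nlinarith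

lemma coe_Q1 : (toR '' ↑Q1) = {((1:ℝ),(0:ℝ)), ((0:ℝ),(1:ℝ)), ((1:ℝ),(2:ℝ)), ((2:ℝ),(0:ℝ))} := by
  simp only [Q1, Finset.coe_insert, Finset.coe_singleton, Set.image_insert_eq,
    Set.image_singleton, toR]
  norm_num

lemma coe_Q2 : (toR '' ↑Q2) = {((0:ℝ),(0:ℝ)), ((1:ℝ),(1:ℝ)), ((0:ℝ),(2:ℝ)), ((-1:ℝ),(1:ℝ))} := by
  simp only [Q2, Finset.coe_insert, Finset.coe_singleton, Set.image_insert_eq,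
    Set.image_singleton, toR]
  norm_num

lemma hull_Q1 : hullR Q1 = H1 := by
  apply le_antisymm
  · rw [hullR, coe_Q1]
    apply convexHull_min _ convex_H1
    rintro p (rfl|rfl|rfl|rfl) <;> norm_num [H1]
  · intro p hp
    obtain ⟨h1, h2, h3, h4⟩ := hp
    have hA : ((1:ℝ),(0:ℝ)) ∈ hullR Q1 := by
      rw [hullR, coe_Q1]; exact subset_convexHull ℝ _ (by norm_num)
    have hB : ((0:ℝ),(1:ℝ)) ∈ hullR Q1 := by
      rw [hullR, coe_Q1]; exact subset_convexHull ℝ _ (by norm_num)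
    have hC : ((1:ℝ),(2:ℝ)) ∈ hullR Q1 := by
      rw [hullR, coe_Q1]; exact subset_convexHull ℝ _ (by norm_num)
    have hD : ((2:ℝ),(0:ℝ)) ∈ hullR Q1 := by
      rw [hullR, coe_Q1]; exact subset_convexHull ℝ _ (by norm_num)
    rcases le_or_gt (p.1 + 2 * p.2 - 2) 0 with h5 | h5
    · -- triangle A B D : coefficients (2 - x - 2y), y, (x+y-1), 0 on C
      have := combo4_mem (convex_hullR Q1) hA hB hD hC
        (a := 2 - p.1 - 2 * p.2) (b := p.2) (c := p.1 + p.2 - 1) (d := 0)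
        (by linarith) (by linarith) (by linarith) (by linarith) (by ring)
      convert this using 1
      simp only [Prod.smul_mk, Prod.mk_add_mk, Prod.ext_iff, smul_eq_mul]
      constructor <;> ring
    · -- triangle B C D : coefficients (4-2x-y)/3 on B, (x+2y-2)/3 on C, (x-y+1)/3 on D
      have := combo4_mem (convex_hullR Q1) hA hB hC hD
        (a := 0) (b := (4 - 2*p.1 - p.2)/3) (c := (p.1 + 2*p.2 - 2)/3) (d := (p.1 - p.2 + 1)/3)
        (by linarith) (by linarith) (by linarith) (by linarith) (by ring)
      convert this using 1
      simp only [Prod.smul_mk, Prod.mk_add_mk, Prod.ext_iff, smul_eq_mul]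
      constructor <;> ring
    
lemma hull_Q2 : hullR Q2 = H2 := by
  apply le_antisymm
  · rw [hullR, coe_Q2]
    apply convexHull_min _ convex_H2
    rintro p (rfl|rfl|rfl|rfl) <;> norm_num [H2]
  · intro p hp
    obtain ⟨h1, h2, h3, h4⟩ := hp
    have hA : ((0:ℝ),(0:ℝ)) ∈ hullR Q2 := by
      rw [hullR, coe_Q2]; exact subset_convexHull ℝ _ (by norm_num)
    have hB : ((1:ℝ),(1:ℝ)) ∈ hullR Q2 := by
      rw [hullR, coe_Q2]; exact subset_convexHull ℝ _ (by norm_num)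
    have hC : ((0:ℝ),(2:ℝ)) ∈ hullR Q2 := by
      rw [hullR, coe_Q2]; exact subset_convexHull ℝ _ (by norm_num)
    have hD : ((-1:ℝ),(1:ℝ)) ∈ hullR Q2 := by
      rw [hullR, coe_Q2]; exact subset_convexHull ℝ _ (by norm_num)
    rcases le_or_gt 0 p.1 with h5 | h5
    · -- triangle A B C : (2 - x - y)/2, x, (y - x)/2
      have := combo4_mem (convex_hullR Q2) hA hB hC hD
        (a := (2 - p.1 - p.2)/2) (b := p.1) (c := (p.2 - p.1)/2) (d := 0)
        (by linarith) (by linarith) (by linarith) (by linarith) (by ring)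
      convert this using 1
      simp only [Prod.smul_mk, Prod.mk_add_mk, Prod.ext_iff, smul_eq_mul]
      constructor <;> ring
    · -- triangle A C D : (2 + x - y)/2, (x+y)/2 on C, -x on D
      have := combo4_mem (convex_hullR Q2) hA hC hD hB
        (a := (2 + p.1 - p.2)/2) (b := (p.1 + p.2)/2) (c := -p.1) (d := 0)
        (by linarith) (by linarith) (by linarith) (by linarith) (by ring)
      convert this using 1
      simp only [Prod.smul_mk, Prod.mk_add_mk, Prod.ext_iff, smul_eq_mul]
      constructor <;> ring


lemma open_S1 : IsOpen S1 := by
  have h1 : IsOpen {p : ℝ × ℝ | 0 < p.1 + p.2 - 1} := isOpen_lt continuous_const (by fun_prop)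
  have h2 : IsOpen {p : ℝ × ℝ | 0 < p.2} := isOpen_lt continuous_const (by fun_prop)
  have h3 : IsOpen {p : ℝ × ℝ | 0 < 4 - 2 * p.1 - p.2} := isOpen_lt continuous_const (by fun_prop)
  have h4 : IsOpen {p : ℝ × ℝ | 0 < p.1 - p.2 + 1} := isOpen_lt continuous_const (by fun_prop)
  have : S1 = {p : ℝ × ℝ | 0 < p.1 + p.2 - 1} ∩ ({p | 0 < p.2} ∩
      ({p | 0 < 4 - 2 * p.1 - p.2} ∩ {p | 0 < p.1 - p.2 + 1})) := rfl
  rw [this]; exact h1.inter (h2.inter (h3.inter h4))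

lemma open_S2 : IsOpen S2 := by
  have h1 : IsOpen {p : ℝ × ℝ | 0 < 2 - p.1 - p.2} := isOpen_lt continuous_const (by fun_prop)
  have h2 : IsOpen {p : ℝ × ℝ | 0 < 2 + p.1 - p.2} := isOpen_lt continuous_const (by fun_prop)
  have h3 : IsOpen {p : ℝ × ℝ | 0 < p.2 - p.1} := isOpen_lt continuous_const (by fun_prop)
  have h4 : IsOpen {p : ℝ × ℝ | 0 < p.1 + p.2} := isOpen_lt continuous_const (by fun_prop)
  have : S2 = {p : ℝ × ℝ | 0 < 2 - p.1 - p.2} ∩ ({p | 0 < 2 + p.1 - p.2} ∩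
      ({p | 0 < p.2 - p.1} ∩ {p | 0 < p.1 + p.2})) := rfl
  rw [this]; exact h1.inter (h2.inter (h3.inter h4))

lemma int_Q1 : interior (hullR Q1) = S1 := by
  apply le_antisymm
  · intro p hp
    have hpH : p ∈ H1 := by rw [← hull_Q1]; exact interior_subset hp
    obtain ⟨h1, h2, h3, h4⟩ := hpH
    by_contra hns
    simp only [S1, Set.mem_setOf_eq, not_and_or, not_lt] at hns
    have hsupp : ∀ (c1 c2 c0 : ℝ), (c1 ≠ 0 ∨ c2 ≠ 0) →
        (∀ q ∈ H1, 0 ≤ c1 * q.1 + c2 * q.2 + c0) →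
        c1 * p.1 + c2 * p.2 + c0 = 0 → False := by
      intro c1 c2 c0 hc hsub heq
      exact not_mem_interior_of_affine_le c1 c2 c0 hc
        (fun q hq => hsub q (by rwa [← hull_Q1])) heq hp
    rcases hns with h | h | h | h
    · exact hsupp 1 1 (-1) (Or.inl one_ne_zero) (fun q hq => by have := hq.1; linarith)
        (by linarith)
    · exact hsupp 0 1 0 (Or.inr one_ne_zero) (fun q hq => by have := hq.2.1; linarith)
        (by linarith)
    · exact hsupp (-2) (-1) 4 (Or.inl (by norm_num)) (fun q hq => by have := hq.2.2.1; linarith)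
        (by linarith)
    · exact hsupp 1 (-1) 1 (Or.inl one_ne_zero) (fun q hq => by have := hq.2.2.2; linarith)
        (by linarith)
  · have hsub : S1 ⊆ hullR Q1 := by
      rw [hull_Q1]; intro p hp; exact ⟨le_of_lt hp.1, le_of_lt hp.2.1, le_of_lt hp.2.2.1, le_of_lt hp.2.2.2⟩
    exact open_S1.subset_interior_iff.mpr hsub

lemma int_Q2 : interior (hullR Q2) = S2 := by
  apply le_antisymm
  · intro p hp
    have hpH : p ∈ H2 := by rw [← hull_Q2]; exact interior_subset hp
    obtain ⟨h1, h2, h3, h4⟩ := hpH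
    by_contra hns
    simp only [S2, Set.mem_setOf_eq, not_and_or, not_lt] at hns
    have hsupp : ∀ (c1 c2 c0 : ℝ), (c1 ≠ 0 ∨ c2 ≠ 0) →
        (∀ q ∈ H2, 0 ≤ c1 * q.1 + c2 * q.2 + c0) →
        c1 * p.1 + c2 * p.2 + c0 = 0 → False := by
      intro c1 c2 c0 hc hsub heq
      exact not_mem_interior_of_affine_le c1 c2 c0 hc
        (fun q hq => hsub q (by rwa [← hull_Q2])) heq hp
    rcases hns with h | h | h | h
    · exact hsupp (-1) (-1) 2 (Or.inl (by norm_num)) (fun q hq => by have := hq.1; linarith)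
        (by linarith)
    · exact hsupp 1 (-1) 2 (Or.inl one_ne_zero) (fun q hq => by have := hq.2.1; linarith)
        (by linarith)
    · exact hsupp (-1) 1 0 (Or.inl (by norm_num)) (fun q hq => by have := hq.2.2.1; linarith)
        (by linarith)
    · exact hsupp 1 1 0 (Or.inl one_ne_zero) (fun q hq => by have := hq.2.2.2; linarith)
        (by linarith)
  · have hsub : S2 ⊆ hullR Q2 := by
      rw [hull_Q2]; intro p hp; exact ⟨le_of_lt hp.1, le_of_lt hp.2.1, le_of_lt hp.2.2.1, le_of_lt hp.2.2.2⟩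
    exact open_S2.subset_interior_iff.mpr hsub

lemma frontier_hull (Q : Finset (ℤ × ℤ)) :
    frontier (hullR Q) = hullR Q \ interior (hullR Q) :=
  (isClosed_hullR Q).frontier_eq

lemma mem_Q1_iff {z : ℤ × ℤ} : z ∈ Q1 ↔ z = (1,0) ∨ z = (0,1) ∨ z = (1,2) ∨ z = (2,0) := by
  simp [Q1]

lemma mem_Q2_iff {z : ℤ × ℤ} : z ∈ Q2 ↔ z = (0,0) ∨ z = (1,1) ∨ z = (0,2) ∨ z = (-1,1) := by
  simp [Q2]

lemma extreme_of_two_tight {Q : Finset (ℤ × ℤ)} {H : Set (ℝ × ℝ)} (hH : hullR Q = H)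
    (g1 g2 : ℝ × ℝ → ℝ)
    (c11 c12 c10 c21 c22 c20 : ℝ)
    (hg1 : ∀ p, g1 p = c11 * p.1 + c12 * p.2 + c10)
    (hg2 : ∀ p, g2 p = c21 * p.1 + c22 * p.2 + c20)
    (hH1 : ∀ p ∈ H, 0 ≤ g1 p) (hH2 : ∀ p ∈ H, 0 ≤ g2 p)
    {v : ℝ × ℝ} (hv : v ∈ H) (ht1 : g1 v = 0) (ht2 : g2 v = 0)
    (huniq : ∀ y : ℝ × ℝ, g1 y = 0 → g2 y = 0 → y = v) :
    v ∈ Set.extremePoints ℝ (hullR Q) := by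
  rw [mem_extremePoints]
  refine ⟨by rw [hH]; exact hv, ?_⟩
  intro y hy z hz hseg
  rw [hH] at hy hz
  obtain ⟨a, b, ha, hb, hab, heq⟩ := hseg
  have key : ∀ (g : ℝ × ℝ → ℝ) (c1 c2 c0 : ℝ), (∀ p, g p = c1 * p.1 + c2 * p.2 + c0) →
      (∀ p ∈ H, 0 ≤ g p) → g v = 0 → g y = 0 ∧ g z = 0 := by
    intro g c1 c2 c0 hg hH0 hgv
    have hcomb : a * g y + b * g z = 0 := by
      have hv1 : v.1 = a * y.1 + b * z.1 := by rw [← heq]; rfl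
      have hv2 : v.2 = a * y.2 + b * z.2 := by rw [← heq]; rfl
      have hgv' := hgv
      rw [hg v, hv1, hv2] at hgv'
      rw [hg y, hg z]
      linear_combination hgv' + c0 * hab
    exact tight_combo ha hb (hH0 y hy) (hH0 z hz) hcomb
  have k1 := key g1 c11 c12 c10 hg1 hH1 ht1
  have k2 := key g2 c21 c22 c20 hg2 hH2 ht2
  exact ⟨huniq y k1.1 k2.1, huniq z k1.2 k2.2⟩

lemma prop_Q1 : IsLatticePolygonPrimitiveEdges Q1 4 1 := by
  refine ⟨by decide, ?_, ?_, ?_⟩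
  · -- extreme points
    intro p hp
    rw [mem_Q1_iff] at hp
    rcases hp with rfl | rfl | rfl | rfl
    · -- (1,0) : tight g1 = x+y-1, g2 = y
      exact extreme_of_two_tight hull_Q1 (fun p => p.1 + p.2 - 1) (fun p => p.2)
        1 1 (-1) 0 1 0 (fun p => by ring) (fun p => by ring)
        (fun p hp => by beta_reduce; linarith [hp.1]) (fun p hp => by beta_reduce; linarith [hp.2.1])
        (by norm_num [H1, toR]) (by norm_num [toR]) (by norm_num [toR])
        (fun y h1 h2 => by
          beta_reduce at h1 h2
          have : y.1 = 1 := by linarith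
          have : y.2 = 0 := by linarith
          simp [toR, Prod.ext_iff]; constructor <;> linarith)
    · -- (0,1) : tight g1 = x+y-1, g4 = x-y+1
      exact extreme_of_two_tight hull_Q1 (fun p => p.1 + p.2 - 1) (fun p => p.1 - p.2 + 1)
        1 1 (-1) 1 (-1) 1 (fun p => by ring) (fun p => by ring)
        (fun p hp => by beta_reduce; linarith [hp.1]) (fun p hp => by beta_reduce; linarith [hp.2.2.2])
        (by norm_num [H1, toR]) (by norm_num [toR]) (by norm_num [toR])
        (fun y h1 h2 => by beta_reduce at h1 h2; simp [toR, Prod.ext_iff]; constructor <;> linarith)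
    · -- (1,2) : tight g3 = 4-2x-y, g4 = x-y+1
      exact extreme_of_two_tight hull_Q1 (fun p => 4 - 2*p.1 - p.2) (fun p => p.1 - p.2 + 1)
        (-2) (-1) 4 1 (-1) 1 (fun p => by ring) (fun p => by ring)
        (fun p hp => by beta_reduce; linarith [hp.2.2.1]) (fun p hp => by beta_reduce; linarith [hp.2.2.2])
        (by norm_num [H1, toR]) (by norm_num [toR]) (by norm_num [toR])
        (fun y h1 h2 => by beta_reduce at h1 h2; simp [toR, Prod.ext_iff]; constructor <;> linarith)
    · -- (2,0) : tight g2 = y, g3 = 4-2x-y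
      exact extreme_of_two_tight hull_Q1 (fun p => p.2) (fun p => 4 - 2*p.1 - p.2)
        0 1 0 (-2) (-1) 4 (fun p => by ring) (fun p => by ring)
        (fun p hp => by beta_reduce; linarith [hp.2.1]) (fun p hp => by beta_reduce; linarith [hp.2.2.1])
        (by norm_num [H1, toR]) (by norm_num [toR]) (by norm_num [toR])
        (fun y h1 h2 => by beta_reduce at h1 h2; simp [toR, Prod.ext_iff]; constructor <;> linarith)
  · -- frontier lattice points
    intro q hq
    rw [frontier_hull, int_Q1, hull_Q1] at hq
    obtain ⟨⟨h1, h2, h3, h4⟩, hns⟩ := hq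
    simp only [S1, Set.mem_setOf_eq, not_and_or, not_lt] at hns
    obtain ⟨z1, z2⟩ := q
    simp only [toR] at h1 h2 h3 h4 hns
    rw [mem_Q1_iff]
    have i1 : 1 ≤ z1 + z2 := by have : (1:ℝ) ≤ (z1:ℝ) + (z2:ℝ) := (by linarith); exact_mod_cast this
    have i2 : 0 ≤ z2 := by exact_mod_cast h2
    have i3 : 2 * z1 + z2 ≤ 4 := by have : 2*(z1:ℝ) + (z2:ℝ) ≤ 4 := (by linarith); exact_mod_cast this
    have i4 : z2 ≤ z1 + 1 := by have : (z2:ℝ) ≤ (z1:ℝ) + 1 := (by linarith); exact_mod_cast this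
    have i5 : z1 + z2 = 1 ∨ z2 = 0 ∨ 2 * z1 + z2 = 4 ∨ z2 = z1 + 1 := by
      rcases hns with h | h | h | h
      · left; have : (z1:ℝ) + (z2:ℝ) = 1 := (by linarith); exact_mod_cast this
      · right; left; have : (z2:ℝ) = 0 := (by linarith); exact_mod_cast this
      · right; right; left; have : 2*(z1:ℝ) + (z2:ℝ) = 4 := (by linarith); exact_mod_cast this
      · right; right; right; have : (z2:ℝ) = (z1:ℝ) + 1 := (by linarith); exact_mod_cast this
    simp only [Prod.mk.injEq]
    omega
  · -- interior lattice points
    have : {q : ℤ × ℤ | toR q ∈ interior (hullR Q1)} = {((1:ℤ), (1:ℤ))} := by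
      ext ⟨z1, z2⟩
      rw [int_Q1]
      simp only [S1, Set.mem_setOf_eq, toR, Set.mem_singleton_iff, Prod.mk.injEq]
      constructor
      · rintro ⟨h1, h2, h3, h4⟩
        have i1 : 1 < z1 + z2 := by have : (1:ℝ) < (z1:ℝ) + (z2:ℝ) := (by linarith); exact_mod_cast this
        have i2 : 0 < z2 := by exact_mod_cast h2
        have i3 : 2 * z1 + z2 < 4 := by have : 2*(z1:ℝ) + (z2:ℝ) < 4 := (by linarith); exact_mod_cast this
        have i4 : z2 < z1 + 1 := by have : (z2:ℝ) < (z1:ℝ) + 1 := (by linarith); exact_mod_cast this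
        omega
      · rintro ⟨rfl, rfl⟩; norm_num
    rw [this, Set.ncard_singleton]

lemma prop_Q2 : IsLatticePolygonPrimitiveEdges Q2 4 1 := by
  refine ⟨by decide, ?_, ?_, ?_⟩
  · intro p hp
    rw [mem_Q2_iff] at hp
    rcases hp with rfl | rfl | rfl | rfl
    · -- (0,0) : tight g3 = y - x, g4 = x + y
      exact extreme_of_two_tight hull_Q2 (fun p => p.2 - p.1) (fun p => p.1 + p.2)
        (-1) 1 0 1 1 0 (fun p => by ring) (fun p => by ring)
        (fun p hp => by beta_reduce; linarith [hp.2.2.1]) (fun p hp => by beta_reduce; linarith [hp.2.2.2])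
        (by norm_num [H2, toR]) (by norm_num [toR]) (by norm_num [toR])
        (fun y h1 h2 => by beta_reduce at h1 h2; simp [toR, Prod.ext_iff]; constructor <;> linarith)
    · -- (1,1) : tight g1 = 2-x-y, g3 = y-x
      exact extreme_of_two_tight hull_Q2 (fun p => 2 - p.1 - p.2) (fun p => p.2 - p.1)
        (-1) (-1) 2 (-1) 1 0 (fun p => by ring) (fun p => by ring)
        (fun p hp => by beta_reduce; linarith [hp.1]) (fun p hp => by beta_reduce; linarith [hp.2.2.1])
        (by norm_num [H2, toR]) (by norm_num [toR]) (by norm_num [toR])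
        (fun y h1 h2 => by beta_reduce at h1 h2; simp [toR, Prod.ext_iff]; constructor <;> linarith)
    · -- (0,2) : tight g1 = 2-x-y, g2 = 2+x-y
      exact extreme_of_two_tight hull_Q2 (fun p => 2 - p.1 - p.2) (fun p => 2 + p.1 - p.2)
        (-1) (-1) 2 1 (-1) 2 (fun p => by ring) (fun p => by ring)
        (fun p hp => by beta_reduce; linarith [hp.1]) (fun p hp => by beta_reduce; linarith [hp.2.1])
        (by norm_num [H2, toR]) (by norm_num [toR]) (by norm_num [toR])
        (fun y h1 h2 => by beta_reduce at h1 h2; simp [toR, Prod.ext_iff]; constructor <;> linarith)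
    · -- (-1,1) : tight g2 = 2+x-y, g4 = x+y
      exact extreme_of_two_tight hull_Q2 (fun p => 2 + p.1 - p.2) (fun p => p.1 + p.2)
        1 (-1) 2 1 1 0 (fun p => by ring) (fun p => by ring)
        (fun p hp => by beta_reduce; linarith [hp.2.1]) (fun p hp => by beta_reduce; linarith [hp.2.2.2])
        (by norm_num [H2, toR]) (by norm_num [toR]) (by norm_num [toR])
        (fun y h1 h2 => by beta_reduce at h1 h2; simp [toR, Prod.ext_iff]; constructor <;> linarith)
  · intro q hq
    rw [frontier_hull, int_Q2, hull_Q2] at hq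
    obtain ⟨⟨h1, h2, h3, h4⟩, hns⟩ := hq
    simp only [S2, Set.mem_setOf_eq, not_and_or, not_lt] at hns
    obtain ⟨z1, z2⟩ := q
    simp only [toR] at h1 h2 h3 h4 hns
    rw [mem_Q2_iff]
    have i1 : z1 + z2 ≤ 2 := by have : (z1:ℝ) + (z2:ℝ) ≤ 2 := (by linarith); exact_mod_cast this
    have i2 : z2 ≤ 2 + z1 := by have : (z2:ℝ) ≤ 2 + (z1:ℝ) := (by linarith); exact_mod_cast this
    have i3 : z1 ≤ z2 := by have : (z1:ℝ) ≤ (z2:ℝ) := (by linarith); exact_mod_cast this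
    have i4 : 0 ≤ z1 + z2 := by have : (0:ℝ) ≤ (z1:ℝ) + (z2:ℝ) := (by linarith); exact_mod_cast this
    have i5 : z1 + z2 = 2 ∨ z2 = 2 + z1 ∨ z1 = z2 ∨ z1 + z2 = 0 := by
      rcases hns with h | h | h | h
      · left; have : (z1:ℝ) + (z2:ℝ) = 2 := (by linarith); exact_mod_cast this
      · right; left; have : (z2:ℝ) = 2 + (z1:ℝ) := (by linarith); exact_mod_cast this
      · right; right; left; have : (z1:ℝ) = (z2:ℝ) := (by linarith); exact_mod_cast this
      · right; right; right; have : (z1:ℝ) + (z2:ℝ) = 0 := (by linarith); exact_mod_cast this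
    simp only [Prod.mk.injEq]
    omega
  · have : {q : ℤ × ℤ | toR q ∈ interior (hullR Q2)} = {((0:ℤ), (1:ℤ))} := by
      ext ⟨z1, z2⟩
      rw [int_Q2]
      simp only [S2, Set.mem_setOf_eq, toR, Set.mem_singleton_iff, Prod.mk.injEq]
      constructor
      · rintro ⟨h1, h2, h3, h4⟩
        have i1 : z1 + z2 < 2 := by have : (z1:ℝ) + (z2:ℝ) < 2 := (by linarith); exact_mod_cast this
        have i2 : z2 < 2 + z1 := by have : (z2:ℝ) < 2 + (z1:ℝ) := (by linarith); exact_mod_cast this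
        have i3 : z1 < z2 := by have : (z1:ℝ) < (z2:ℝ) := (by linarith); exact_mod_cast this
        have i4 : 0 < z1 + z2 := by have : (0:ℝ) < (z1:ℝ) + (z2:ℝ) := (by linarith); exact_mod_cast this
        omega
      · rintro ⟨rfl, rfl⟩; norm_num
    rw [this, Set.ncard_singleton]


lemma unimodular_inverse {T : ℤ × ℤ → ℤ × ℤ} (hT : IsUnimodularAffine T) :
    ∃ S : ℤ × ℤ → ℤ × ℤ, IsUnimodularAffine S ∧ (∀ p, S (T p) = p) ∧ (∀ p, T (S p) = p) := by
  obtain ⟨a, b, c, d, e, f, hdet, hform⟩ := hT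
  have hD2 : (a * d - b * c) * (a * d - b * c) = 1 := by
    rcases hdet with h | h <;> rw [h] <;> ring
  refine ⟨fun p => ((a*d-b*c)*d*p.1 + (-((a*d-b*c)*b))*p.2 + ((a*d-b*c)*b*f - (a*d-b*c)*d*e),
      (-((a*d-b*c)*c))*p.1 + (a*d-b*c)*a*p.2 + ((a*d-b*c)*c*e - (a*d-b*c)*a*f)), ?_, ?_, ?_⟩
  · refine ⟨(a*d-b*c)*d, -((a*d-b*c)*b), -((a*d-b*c)*c), (a*d-b*c)*a,
      (a*d-b*c)*b*f - (a*d-b*c)*d*e, (a*d-b*c)*c*e - (a*d-b*c)*a*f, ?_, fun p => rfl⟩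
    rcases hdet with h | h
    · left; rw [h]; linarith
    · right; rw [h]; linarith
  · intro p
    rw [hform p]
    refine Prod.ext ?_ ?_ <;> simp only <;>
      [(first | linear_combination p.1 * hD2 | linear_combination (p.1 - e) * hD2 | linear_combination (p.1 + e) * hD2);
       (first | linear_combination p.2 * hD2 | linear_combination (p.2 - f) * hD2 | linear_combination (p.2 + f) * hD2)]
  · intro p
    rw [hform _]
    refine Prod.ext ?_ ?_ <;> simp only <;>
      [(first | linear_combination p.1 * hD2 | linear_combination (p.1 - e) * hD2 | linear_combination (p.1 + e) * hD2);
       (first | linear_combination p.2 * hD2 | linear_combination (p.2 - f) * hD2 | linear_combination (p.2 + f) * hD2)]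

lemma latticeEquiv_symm {Q Q' : Finset (ℤ × ℤ)} (h : LatticeEquiv Q Q') : LatticeEquiv Q' Q := by
  obtain ⟨T, hT, rfl⟩ := h
  obtain ⟨S, hS, hST, hTS⟩ := unimodular_inverse hT
  refine ⟨S, hS, ?_⟩
  rw [Finset.image_image]
  have : Q.image (S ∘ T) = Q.image id := Finset.image_congr (fun x _ => hST x)
  rw [this, Finset.image_id]

lemma prop_transport {Q : Finset (ℤ × ℤ)} {T : ℤ × ℤ → ℤ × ℤ} (hT : IsUnimodularAffine T)
    (h : IsLatticePolygonPrimitiveEdges Q 4 1) :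
    IsLatticePolygonPrimitiveEdges (Q.image T) 4 1 := by
  obtain ⟨S, hS, hST, hTS⟩ := unimodular_inverse hT
  obtain ⟨a, b, c, d, e, f, hdet, hform⟩ := hT
  have hD2 : ((a:ℝ) * d - b * c) * ((a:ℝ) * d - b * c) = 1 := by
    rcases hdet with hh | hh
    · have : ((a:ℝ) * d - b * c) = 1 := by exact_mod_cast hh
      rw [this]; ring
    · have : ((a:ℝ) * d - b * c) = -1 := by exact_mod_cast hh
      rw [this]; ring
  set D : ℝ := (a:ℝ) * d - b * c with hDdef
  -- the real affine map and its inverse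
  set F : ℝ × ℝ → ℝ × ℝ := fun v => ((a:ℝ) * v.1 + b * v.2 + e, (c:ℝ) * v.1 + d * v.2 + f)
    with hFdef
  set G : ℝ × ℝ → ℝ × ℝ := fun v =>
    (D * d * (v.1 - e) - D * b * (v.2 - f), -(D * c) * (v.1 - e) + D * a * (v.2 - f)) with hGdef
  have hGF : ∀ v, G (F v) = v := by
    intro v
    refine Prod.ext ?_ ?_ <;> simp only [hFdef, hGdef] <;>
      [linear_combination v.1 * hD2; linear_combination v.2 * hD2]
  have hFG : ∀ v, F (G v) = v := by
    intro v
    refine Prod.ext ?_ ?_ <;> simp only [hFdef, hGdef] <;>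
      [linear_combination (v.1 - e) * hD2; linear_combination (v.2 - f) * hD2]
  have hcontF : Continuous F := by fun_prop
  have hcontG : Continuous G := by fun_prop
  let E : Homeomorph (ℝ × ℝ) (ℝ × ℝ) :=
    { toFun := F, invFun := G, left_inv := hGF, right_inv := hFG,
      continuous_toFun := hcontF, continuous_invFun := hcontG }
  have hFtoR : ∀ p : ℤ × ℤ, F (toR p) = toR (T p) := by
    intro p
    rw [hform p]
    refine Prod.ext ?_ ?_ <;> simp [hFdef, toR] <;> push_cast <;> ring
  have hGtoR : ∀ p : ℤ × ℤ, G (toR p) = toR (S p) := by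
    intro p
    have := hFtoR (S p)
    rw [hTS p] at this
    rw [← this, hGF]
  -- affine structure of F
  have haffF : ∀ (α β : ℝ) (u v : ℝ × ℝ), α + β = 1 →
      F (α • u + β • v) = α • F u + β • F v := by
    intro α β u v hab
    refine Prod.ext ?_ ?_ <;>
      simp only [hFdef, Prod.fst_add, Prod.snd_add, Prod.smul_fst, Prod.smul_snd, smul_eq_mul] <;>
      first
        | linear_combination ((e:ℝ)) * hab
        | linear_combination (-(e:ℝ)) * hab
        | linear_combination ((f:ℝ)) * hab
        | linear_combination (-(f:ℝ)) * hab
  have haffG : ∀ (α β : ℝ) (u v : ℝ × ℝ), α + β = 1 →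
      G (α • u + β • v) = α • G u + β • G v := by
    intro α β u v hab
    refine Prod.ext ?_ ?_ <;>
      simp only [hGdef, Prod.fst_add, Prod.snd_add, Prod.smul_fst, Prod.smul_snd, smul_eq_mul] <;>
      first
        | linear_combination (D * b * f - D * d * e) * hab
        | linear_combination (D * d * e - D * b * f) * hab
        | linear_combination (D * c * e - D * a * f) * hab
        | linear_combination (D * a * f - D * c * e) * hab
  -- image of the hull
  have himg : hullR (Q.image T) = F '' hullR Q := by
    have h1 : toR '' ↑(Q.image T) = F '' (toR '' ↑Q) := by
      rw [Finset.coe_image, ← Set.image_comp, ← Set.image_comp]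
      exact Set.image_congr (fun p _ => (hFtoR p).symm)
    rw [hullR, h1]
    let L : ℝ × ℝ →ₗ[ℝ] ℝ × ℝ :=
      { toFun := fun v => ((a:ℝ) * v.1 + b * v.2, (c:ℝ) * v.1 + d * v.2),
        map_add' := fun u v => by
          refine Prod.ext ?_ ?_ <;>
            simp only [Prod.fst_add, Prod.snd_add] <;> ring
        map_smul' := fun r v => by
          refine Prod.ext ?_ ?_ <;>
            simp only [Prod.smul_fst, Prod.smul_snd, smul_eq_mul, RingHom.id_apply] <;> ring }
    let Faff : ℝ × ℝ →ᵃ[ℝ] ℝ × ℝ :=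
      { toFun := F, linear := L,
        map_vadd' := fun p v => by
          show F (v + p) = L v + F p
          refine Prod.ext ?_ ?_ <;>
            simp only [hFdef, Prod.fst_add, Prod.snd_add] <;> show _ = _ <;> dsimp [L] <;> ring }
    have himgc := Faff.image_convexHull (toR '' (Q : Set (ℤ × ℤ)))
    have hcoe : ⇑Faff = F := rfl
    rw [hcoe] at himgc
    exact himgc.symm
  have hEcoe : ⇑E = F := rfl
  have hEsymm : ∀ s : Set (ℝ × ℝ), F '' interior s = interior (F '' s) := by
    intro s
    have := E.image_interior s
    rwa [hEcoe] at this
  have hEfr : ∀ s : Set (ℝ × ℝ), F '' frontier s = frontier (F '' s) := by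
    intro s
    have := E.image_frontier s
    rwa [hEcoe] at this
  have hTinj : Function.Injective T := Function.LeftInverse.injective hST
  obtain ⟨hcard, hext, hfr, hcnt⟩ := h
  refine ⟨?_, ?_, ?_, ?_⟩
  · rw [Finset.card_image_of_injective _ hTinj, hcard]
  · intro p hp
    obtain ⟨q, hq, rfl⟩ := Finset.mem_image.mp hp
    rw [himg, ← hFtoR]
    have hq' := hext q hq
    rw [mem_extremePoints] at hq' ⊢
    refine ⟨Set.mem_image_of_mem F hq'.1, ?_⟩
    rintro y1 ⟨z1, hz1, rfl⟩ y2 ⟨z2, hz2, rfl⟩ hseg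
    obtain ⟨α, β, hα, hβ, hαβ, heq⟩ := hseg
    have hkey : toR q = α • z1 + β • z2 := by
      have h1 : G (α • F z1 + β • F z2) = α • z1 + β • z2 := by
        rw [haffG α β _ _ hαβ, hGF, hGF]
      rw [← h1, heq, hGF]
    have := hq'.2 z1 hz1 z2 hz2 ⟨α, β, hα, hβ, hαβ, hkey.symm⟩
    exact ⟨congrArg F this.1, congrArg F this.2⟩
  · intro q hq
    rw [himg, ← hEfr] at hq
    obtain ⟨x, hx, hFx⟩ := hq
    have hxval : x = toR (S q) := by
      rw [← hGtoR, ← hFx, hGF]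
    rw [hxval] at hx
    have : S q ∈ Q := hfr _ hx
    have := Finset.mem_image_of_mem T this
    rwa [hTS q] at this
  · have hset : {q : ℤ × ℤ | toR q ∈ interior (hullR (Q.image T))} =
        T '' {q : ℤ × ℤ | toR q ∈ interior (hullR Q)} := by
      ext q
      simp only [Set.mem_setOf_eq, Set.mem_image]
      rw [himg, ← hEsymm]
      constructor
      · rintro ⟨x, hx, hFx⟩
        have hxval : x = toR (S q) := by rw [← hGtoR, ← hFx, hGF]
        rw [hxval] at hx
        exact ⟨S q, hx, hTS q⟩
      · rintro ⟨z, hz, rfl⟩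
        exact ⟨toR z, hz, hFtoR z⟩
    rw [hset, Set.ncard_image_of_injective _ hTinj, hcnt]

lemma combo3_interior {s : Set (ℝ × ℝ)} (hconv : Convex ℝ s) (hcl : IsClosed s)
    {W X Y : ℝ × ℝ} (hW : W ∈ interior s) (hX : X ∈ s) (hY : Y ∈ s) {a b c : ℝ}
    (ha : 0 < a) (hb : 0 ≤ b) (hc : 0 ≤ c) (h1 : a + b + c = 1) :
    a • W + b • X + c • Y ∈ interior s := by
  rcases eq_or_lt_of_le (add_nonneg hb hc) with hbc | hbc
  · have hb0 : b = 0 := by linarith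
    have hc0 : c = 0 := by linarith
    have ha1 : a = 1 := by linarith
    simpa [hb0, hc0, ha1] using hW
  · have hM : (b/(b+c)) • X + (c/(b+c)) • Y ∈ s := by
      apply hconv hX hY (by positivity) (by positivity)
      field_simp
    have hMc : (b/(b+c)) • X + (c/(b+c)) • Y ∈ closure s := by
      rw [hcl.closure_eq]; exact hM
    have := hconv.combo_interior_closure_mem_interior hW hMc ha (le_of_lt hbc) (by linarith)
    have heq : a • W + (b+c) • ((b/(b+c)) • X + (c/(b+c)) • Y) = a • W + b • X + c • Y := by
      rw [smul_add, smul_smul, smul_smul]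
      have e1 : (b+c) * (b/(b+c)) = b := by field_simp
      have e2 : (b+c) * (c/(b+c)) = c := by field_simp
      rw [e1, e2, add_assoc]
    rwa [heq] at this

lemma convex_halfplane (c1 c2 c0 : ℝ) : Convex ℝ {p : ℝ × ℝ | 0 ≤ c1 * p.1 + c2 * p.2 + c0} := by
  intro x hx y hy α β hα hβ hαβ
  simp only [Set.mem_setOf_eq, Prod.fst_add, Prod.snd_add, Prod.smul_fst, Prod.smul_snd,
    smul_eq_mul] at *
  have hβ' : β = 1 - α := by linarith
  subst hβ'
  nlinarith [mul_nonneg hα hx, mul_nonneg hβ hy]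

lemma toR_add (p q : ℤ × ℤ) : toR (p + q) = toR p + toR q := by
  simp [toR, Prod.ext_iff]

/-- primitivity of vertex directions -/
lemma vertex_primitive {Q : Finset (ℤ × ℤ)} {w v : ℤ × ℤ}
    (hwint : toR w ∈ interior (hullR Q))
    (hone : ∀ z : ℤ × ℤ, toR z ∈ interior (hullR Q) → z = w)
    (hext : ∀ p ∈ Q, toR p ∈ Set.extremePoints ℝ (hullR Q))
    (hv : w + v ∈ Q) : v ≠ 0 ∧ Int.gcd v.1 v.2 = 1 := by
  have hvne : v ≠ 0 := by
    rintro rfl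
    rw [add_zero] at hv
    exact extreme_not_interior (hext w hv) hwint
  refine ⟨hvne, ?_⟩
  set g := Int.gcd v.1 v.2 with hgdef
  have hg0 : g ≠ 0 := by
    intro hg
    rw [hgdef] at hg
    have := Int.gcd_eq_zero_iff.mp hg
    exact hvne (Prod.ext this.1 this.2)
  by_contra hgne
  have hg2 : 2 ≤ g := by omega
  obtain ⟨k1, hk1⟩ : (g:ℤ) ∣ v.1 := Int.gcd_dvd_left _ _
  obtain ⟨k2, hk2⟩ : (g:ℤ) ∣ v.2 := Int.gcd_dvd_right _ _
  have hgR : (0:ℝ) < (g:ℝ) := by positivity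
  have hcombo : toR (w + (k1, k2)) = (1 - 1/(g:ℝ)) • toR w + (1/(g:ℝ)) • toR (w + v) := by
    refine Prod.ext ?_ ?_ <;>
      simp only [toR, toR_add, Prod.fst_add, Prod.snd_add, Prod.smul_fst, Prod.smul_snd,
        smul_eq_mul] <;> push_cast [hk1, hk2] <;> field_simp <;> ring
  have hintmem : toR (w + (k1, k2)) ∈ interior (hullR Q) := by
    rw [hcombo]
    apply (convex_hullR Q).combo_interior_closure_mem_interior hwint
      (by rw [(isClosed_hullR Q).closure_eq]; exact mem_hullR_of_mem hv)
    · have : 1/(g:ℝ) ≤ 1/2 := by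
        apply one_div_le_one_div_of_le <;> [norm_num; exact_mod_cast hg2]
      linarith
    · positivity
    · ring
  have := hone _ hintmem
  have h1 : k1 = 0 := by
    have := congrArg Prod.fst this
    simp at this
    omega
  have h2 : k2 = 0 := by
    have := congrArg Prod.snd this
    simp at this
    omega
  apply hvne
  refine Prod.ext ?_ ?_ <;> simp [hk1, hk2, h1, h2]

/-- auxiliary: positive determinant at least 2 is impossible -/
lemma det_ge_two_false {Q : Finset (ℤ × ℤ)} {w v1 v2 : ℤ × ℤ}
    (hwint : toR w ∈ interior (hullR Q))
    (hext : ∀ p ∈ Q, toR p ∈ Set.extremePoints ℝ (hullR Q))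
    (hlat : ∀ z : ℤ × ℤ, toR z ∈ hullR Q → z ∈ Q ∨ z = w)
    (h1 : w + v1 ∈ Q) (h2 : w + v2 ∈ Q)
    (hp1 : Int.gcd v1.1 v1.2 = 1) (hp2 : Int.gcd v2.1 v2.2 = 1)
    (hD : 2 ≤ v1.1 * v2.2 - v1.2 * v2.1) : False := by
  set D : ℤ := v1.1 * v2.2 - v1.2 * v2.1 with hDdef
  have hDpos : 0 < D := by omega
  have key : ∀ z : ℤ × ℤ, ∀ A B : ℤ, 1 ≤ A → 1 ≤ B → A + B ≤ D →
      z.1 * v2.2 - z.2 * v2.1 = A → v1.1 * z.2 - v1.2 * z.1 = B → False := by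
    intro z A B hA hB hAB hdetA hdetB
    have hid1 : z.1 * D = A * v1.1 + B * v2.1 := by
      rw [hDdef]; linear_combination v1.1 * hdetA + v2.1 * hdetB
    have hid2 : z.2 * D = A * v1.2 + B * v2.2 := by
      rw [hDdef]; linear_combination v1.2 * hdetA + v2.2 * hdetB
    have hDR : (0:ℝ) < (D:ℝ) := by exact_mod_cast hDpos
    have hApos : (0:ℝ) < (A:ℝ) := by exact_mod_cast (show (0:ℤ) < A by omega)
    have hBpos : (0:ℝ) < (B:ℝ) := by exact_mod_cast (show (0:ℤ) < B by omega)
    have hs : 0 < (A:ℝ)/(D:ℝ) := div_pos hApos hDR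
    have ht : 0 < (B:ℝ)/(D:ℝ) := div_pos hBpos hDR
    have hst : (A:ℝ)/(D:ℝ) + (B:ℝ)/(D:ℝ) ≤ 1 := by
      rw [← add_div, div_le_one hDR]
      exact_mod_cast hAB
    have hid1R : (z.1:ℝ) * (D:ℝ) = (A:ℝ) * (v1.1:ℝ) + (B:ℝ) * (v2.1:ℝ) := by exact_mod_cast hid1
    have hid2R : (z.2:ℝ) * (D:ℝ) = (A:ℝ) * (v1.2:ℝ) + (B:ℝ) * (v2.2:ℝ) := by exact_mod_cast hid2
    have hcombo : toR (w + z) = (1 - (A:ℝ)/(D:ℝ) - (B:ℝ)/(D:ℝ)) • toR w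
        + ((A:ℝ)/(D:ℝ)) • toR (w + v1) + ((B:ℝ)/(D:ℝ)) • toR (w + v2) := by
      refine Prod.ext ?_ ?_ <;>
        simp only [toR, Prod.fst_add, Prod.snd_add, Prod.smul_fst, Prod.smul_snd, smul_eq_mul,
          Int.cast_add] <;>
        field_simp <;>
        first
          | linear_combination hid1R
          | linear_combination -hid1R
          | linear_combination hid2R
          | linear_combination -hid2R
    have hhull : toR (w + z) ∈ hullR Q := by
      rw [hcombo]
      exact combo3_mem (convex_hullR Q) (interior_subset hwint)
        (mem_hullR_of_mem h1) (mem_hullR_of_mem h2)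
        (by linarith) (le_of_lt hs) (le_of_lt ht) (by ring)
    rcases hlat _ hhull with hmem | heqw
    · rcases eq_or_lt_of_le hAB with hABeq | hABlt
      · -- on the open segment between the two vertices
        have hst1 : (A:ℝ)/(D:ℝ) + (B:ℝ)/(D:ℝ) = 1 := by
          rw [← add_div, div_eq_one_iff_eq (ne_of_gt hDR)]
          exact_mod_cast hABeq
        have hseg : toR (w + z) ∈ openSegment ℝ (toR (w + v1)) (toR (w + v2)) := by
          refine ⟨(A:ℝ)/(D:ℝ), (B:ℝ)/(D:ℝ), hs, ht, hst1, ?_⟩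
        
          rw [hcombo]
          have hz : 1 - (A:ℝ)/(D:ℝ) - (B:ℝ)/(D:ℝ) = 0 := by linarith
          rw [hz, zero_smul, zero_add]
        have hex := (mem_extremePoints.mp (hext _ hmem)).2 _ (mem_hullR_of_mem h1)
          _ (mem_hullR_of_mem h2) hseg
        have hv1z : v1 = z := add_left_cancel (toR_inj hex.1)
        have : B = 0 := by rw [← hdetB, ← hv1z]; ring
        omega
      · -- interior point
        have hstlt : (A:ℝ)/(D:ℝ) + (B:ℝ)/(D:ℝ) < 1 := by
          rw [← add_div, div_lt_one hDR]
          exact_mod_cast hABlt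
        have hint : toR (w + z) ∈ interior (hullR Q) := by
          rw [hcombo]
          exact combo3_interior (convex_hullR Q) (isClosed_hullR Q) hwint
            (mem_hullR_of_mem h1) (mem_hullR_of_mem h2)
            (by linarith) (le_of_lt hs) (le_of_lt ht) (by ring)
        exact extreme_not_interior (hext _ hmem) hint
    · -- w + z = w forces A = 0
      have hz1 : z.1 = 0 := by
        have := congrArg Prod.fst heqw; simp at this; omega
      have hz2 : z.2 = 0 := by
        have := congrArg Prod.snd heqw; simp at this; omega
      rw [hz1, hz2] at hdetA
      omega
  -- find a lattice point with non-integral coordinates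
  obtain ⟨z0, hz0bad⟩ : ∃ z0 : ℤ × ℤ,
      ¬(D ∣ (z0.1 * v2.2 - z0.2 * v2.1) ∧ D ∣ (v1.1 * z0.2 - v1.2 * z0.1)) := by
    by_cases hc1 : (D ∣ v2.2) ∧ (D ∣ v1.2)
    · by_cases hc2 : (D ∣ v2.1) ∧ (D ∣ v1.1)
      · exfalso
        have hdg : D ∣ (Int.gcd v1.1 v1.2 : ℤ) := Int.dvd_coe_gcd hc2.2 hc1.2
        rw [hp1] at hdg
        have := Int.le_of_dvd (by norm_num) hdg
        omega
      · refine ⟨((0:ℤ), (1:ℤ)), ?_⟩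
        rintro ⟨ha, hb⟩
        apply hc2
        constructor
        · have e : (0:ℤ) * v2.2 - 1 * v2.1 = -v2.1 := by ring
          rw [e] at ha
          exact (Int.dvd_neg).mp ha
        · have e : v1.1 * 1 - v1.2 * 0 = v1.1 := by ring
          rwa [e] at hb
    · refine ⟨((1:ℤ), (0:ℤ)), ?_⟩
      rintro ⟨ha, hb⟩
      apply hc1
      constructor
      · have e : (1:ℤ) * v2.2 - 0 * v2.1 = v2.2 := by ring
        rwa [e] at ha
      · have e : v1.1 * 0 - v1.2 * 1 = -v1.2 := by ring
        rw [e] at hb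
        exact (Int.dvd_neg).mp hb
  -- division with remainder
  obtain ⟨n1, α1, hα1nn, hα1lt, hα1eq⟩ : ∃ n α : ℤ, 0 ≤ α ∧ α < D ∧
      z0.1 * v2.2 - z0.2 * v2.1 = D * n + α :=
    ⟨(z0.1 * v2.2 - z0.2 * v2.1) / D, (z0.1 * v2.2 - z0.2 * v2.1) % D,
      Int.emod_nonneg _ (by omega), Int.emod_lt_of_pos _ hDpos,
      by linarith [Int.mul_ediv_add_emod (z0.1 * v2.2 - z0.2 * v2.1) D]⟩
  obtain ⟨n2, β1, hβ1nn, hβ1lt, hβ1eq⟩ : ∃ n β : ℤ, 0 ≤ β ∧ β < D ∧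
      v1.1 * z0.2 - v1.2 * z0.1 = D * n + β :=
    ⟨(v1.1 * z0.2 - v1.2 * z0.1) / D, (v1.1 * z0.2 - v1.2 * z0.1) % D,
      Int.emod_nonneg _ (by omega), Int.emod_lt_of_pos _ hDpos,
      by linarith [Int.mul_ediv_add_emod (v1.1 * z0.2 - v1.2 * z0.1) D]⟩
  set z1 : ℤ × ℤ := (z0.1 - n1 * v1.1 - n2 * v2.1, z0.2 - n1 * v1.2 - n2 * v2.2) with hz1def
  have hz1A : z1.1 * v2.2 - z1.2 * v2.1 = α1 := by
    rw [hz1def]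
    simp only
    rw [hDdef] at hα1eq
    linear_combination hα1eq
  have hz1B : v1.1 * z1.2 - v1.2 * z1.1 = β1 := by
    rw [hz1def]
    simp only
    rw [hDdef] at hβ1eq
    linear_combination hβ1eq
  have hnz : ¬(α1 = 0 ∧ β1 = 0) := by
    rintro ⟨ha, hb⟩
    exact hz0bad ⟨⟨n1, by omega⟩, ⟨n2, by omega⟩⟩
  have hα1pos : 1 ≤ α1 := by
    rcases eq_or_lt_of_le hα1nn with h | h
    · exfalso
      have hβpos : 0 < β1 := by
        rcases eq_or_lt_of_le hβ1nn with h' | h'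
        · exact absurd ⟨h.symm, h'.symm⟩ hnz
        · exact h'
      have hiA : z1.1 * D = β1 * v2.1 := by
        rw [hDdef]; linear_combination v1.1 * hz1A + v2.1 * hz1B - v1.1 * h
      have hiB : z1.2 * D = β1 * v2.2 := by
        rw [hDdef]; linear_combination v1.2 * hz1A + v2.2 * hz1B - v1.2 * h
      obtain ⟨m, n, hmn⟩ : IsCoprime v2.1 v2.2 := Int.isCoprime_iff_gcd_eq_one.mpr hp2
      have hdvd : D ∣ β1 := ⟨m * z1.1 + n * z1.2, by
        first
          | linear_combination m * hiA + n * hiB + β1 * hmn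
          | linear_combination -(m * hiA) - n * hiB - β1 * hmn
          | linear_combination m * hiA + n * hiB - β1 * hmn
          | linear_combination -(m * hiA) - n * hiB + β1 * hmn⟩
      have := Int.le_of_dvd hβpos hdvd
      omega
    · omega
  have hβ1pos : 1 ≤ β1 := by
    rcases eq_or_lt_of_le hβ1nn with h | h
    · exfalso
      have hiA : z1.1 * D = α1 * v1.1 := by
        rw [hDdef]; linear_combination v1.1 * hz1A + v2.1 * hz1B - v2.1 * h
      have hiB : z1.2 * D = α1 * v1.2 := by
        rw [hDdef]; linear_combination v1.2 * hz1A + v2.2 * hz1B - v2.2 * h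
      obtain ⟨m, n, hmn⟩ : IsCoprime v1.1 v1.2 := Int.isCoprime_iff_gcd_eq_one.mpr hp1
      have hdvd : D ∣ α1 := ⟨m * z1.1 + n * z1.2, by
        first
          | linear_combination m * hiA + n * hiB + α1 * hmn
          | linear_combination -(m * hiA) - n * hiB - α1 * hmn
          | linear_combination m * hiA + n * hiB - α1 * hmn
          | linear_combination -(m * hiA) - n * hiB + α1 * hmn⟩
      have := Int.le_of_dvd (by omega) hdvd
      omega
    · omega
  rcases le_or_gt (α1 + β1) D with hcase | hcase
  · exact key z1 α1 β1 hα1pos hβ1pos hcase hz1A hz1B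
  · refine key (v1.1 + v2.1 - z1.1, v1.2 + v2.2 - z1.2) (D - α1) (D - β1)
      (by omega) (by omega) (by omega) ?_ ?_
    · rw [hDdef]; simp only; linear_combination -hz1A
    · rw [hDdef]; simp only; linear_combination -hz1B

lemma det_pm_one {Q : Finset (ℤ × ℤ)} {w v1 v2 : ℤ × ℤ}
    (hwint : toR w ∈ interior (hullR Q))
    (hext : ∀ p ∈ Q, toR p ∈ Set.extremePoints ℝ (hullR Q))
    (hlat : ∀ z : ℤ × ℤ, toR z ∈ hullR Q → z ∈ Q ∨ z = w)
    (h1 : w + v1 ∈ Q) (h2 : w + v2 ∈ Q)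
    (hp1 : Int.gcd v1.1 v1.2 = 1) (hp2 : Int.gcd v2.1 v2.2 = 1)
    (hD : v1.1 * v2.2 - v1.2 * v2.1 ≠ 0) :
    v1.1 * v2.2 - v1.2 * v2.1 = 1 ∨ v1.1 * v2.2 - v1.2 * v2.1 = -1 := by
  by_contra hcon
  push_neg at hcon
  rcases lt_or_gt_of_ne hD with hneg | hpos
  · have hle : v1.1 * v2.2 - v1.2 * v2.1 ≤ -2 := by omega
    have hswap : v2.1 * v1.2 - v2.2 * v1.1 = -(v1.1 * v2.2 - v1.2 * v2.1) := by ring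
    have : 2 ≤ v2.1 * v1.2 - v2.2 * v1.1 := by linarith
    exact det_ge_two_false hwint hext hlat h2 h1 hp2 hp1 this
  · have : 2 ≤ v1.1 * v2.2 - v1.2 * v2.1 := by omega
    exact det_ge_two_false hwint hext hlat h1 h2 hp1 hp2 this

lemma dep_neg {a b : ℤ × ℤ} (hpa : Int.gcd a.1 a.2 = 1) (hpb : Int.gcd b.1 b.2 = 1)
    (hdep : a.1 * b.2 - a.2 * b.1 = 0) (hne : b ≠ a) : b = -a := by
  obtain ⟨m, n, hmn⟩ : IsCoprime a.1 a.2 := Int.isCoprime_iff_gcd_eq_one.mpr hpa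
  set k : ℤ := m * b.1 + n * b.2 with hkdef
  have hb1 : b.1 = k * a.1 := by
    rw [hkdef]
    first
      | linear_combination -(b.1 * hmn) - n * hdep
      | linear_combination -(b.1 * hmn) + n * hdep
      | linear_combination b.1 * hmn + n * hdep
      | linear_combination b.1 * hmn - n * hdep
  have hb2 : b.2 = k * a.2 := by
    rw [hkdef]
    first
      | linear_combination -(b.2 * hmn) - m * hdep
      | linear_combination -(b.2 * hmn) + m * hdep
      | linear_combination b.2 * hmn + m * hdep
      | linear_combination b.2 * hmn - m * hdep
  have hgcd : Int.gcd b.1 b.2 = k.natAbs * Int.gcd a.1 a.2 := by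
    rw [hb1, hb2]
    exact Int.gcd_mul_left k a.1 a.2
  rw [hpa, hpb, mul_one] at hgcd
  have hk : k = 1 ∨ k = -1 := Int.natAbs_eq_iff.mp hgcd.symm |>.imp (by simp) (by simp)
  rcases hk with hk1 | hk1 <;> rw [hk1] at hb1 hb2
  · exfalso
    apply hne
    refine Prod.ext ?_ ?_ <;> omega
  · refine Prod.ext ?_ ?_ <;> simp only [Prod.fst_neg, Prod.snd_neg] <;> omega

theorem forward_classification {Q : Finset (ℤ × ℤ)}
    (h : IsLatticePolygonPrimitiveEdges Q 4 1) :
    LatticeEquiv Q Q1 ∨ LatticeEquiv Q Q2 := by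
  obtain ⟨hcard, hext, hfr, hcnt⟩ := h
  obtain ⟨w, hw⟩ := Set.ncard_eq_one.mp hcnt
  have hwint : toR w ∈ interior (hullR Q) := by
    have : w ∈ {q : ℤ × ℤ | toR q ∈ interior (hullR Q)} := by rw [hw]; rfl
    exact this
  have hone : ∀ z : ℤ × ℤ, toR z ∈ interior (hullR Q) → z = w := by
    intro z hz
    have : z ∈ ({w} : Set (ℤ × ℤ)) := by rw [← hw]; exact hz
    exact this
  have hlat : ∀ z : ℤ × ℤ, toR z ∈ hullR Q → z ∈ Q ∨ z = w := by
    intro z hz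
    by_cases hzi : toR z ∈ interior (hullR Q)
    · exact Or.inr (hone z hzi)
    · left
      apply hfr
      rw [frontier_hull]
      exact ⟨hz, hzi⟩
  have hwQ : w ∉ Q := fun hc => extreme_not_interior (hext w hc) hwint
  -- pigeonhole mod 2 to find the diagonal
  have hcard5 : (insert w Q).card = 5 := by
    rw [Finset.card_insert_of_notMem hwQ, hcard]
  obtain ⟨p, hp, q, hq, hpq, hfeq⟩ := Finset.exists_ne_map_eq_of_card_lt_of_maps_to
    (s := insert w Q) (t := (Finset.univ : Finset (ZMod 2 × ZMod 2)))
    (by rw [hcard5]; decide) (f := fun p => ((p.1 : ZMod 2), (p.2 : ZMod 2)))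
    (fun a _ => Finset.mem_univ _)
  have hdvd1 : (2:ℤ) ∣ q.1 - p.1 := by
    have h1 := congrArg Prod.fst hfeq
    simp only at h1
    exact (ZMod.intCast_eq_intCast_iff _ _ _).mp h1 |>.dvd
  have hdvd2 : (2:ℤ) ∣ q.2 - p.2 := by
    have h2 := congrArg Prod.snd hfeq
    simp only at h2
    exact (ZMod.intCast_eq_intCast_iff _ _ _).mp h2 |>.dvd
  obtain ⟨m1, hm1⟩ : ∃ m1, p.1 + q.1 = 2 * m1 := by
    obtain ⟨k, hk⟩ := hdvd1; exact ⟨p.1 + k, by omega⟩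
  obtain ⟨m2, hm2⟩ : ∃ m2, p.2 + q.2 = 2 * m2 := by
    obtain ⟨k, hk⟩ := hdvd2; exact ⟨p.2 + k, by omega⟩
  have hphull : toR p ∈ hullR Q := by
    rcases Finset.mem_insert.mp hp with rfl | hmem
    · exact interior_subset hwint
    · exact mem_hullR_of_mem hmem
  have hqhull : toR q ∈ hullR Q := by
    rcases Finset.mem_insert.mp hq with rfl | hmem
    · exact interior_subset hwint
    · exact mem_hullR_of_mem hmem
  have htoRm : toR ((m1, m2) : ℤ × ℤ) = (1/2 : ℝ) • toR p + (1/2 : ℝ) • toR q := by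
    refine Prod.ext ?_ ?_ <;>
      simp only [toR, Prod.fst_add, Prod.snd_add, Prod.smul_fst, Prod.smul_snd, smul_eq_mul] <;>
      [(have : (2:ℝ) * (m1:ℝ) = (p.1:ℝ) + q.1 := by exact_mod_cast hm1.symm);
       (have : (2:ℝ) * (m2:ℝ) = (p.2:ℝ) + q.2 := by exact_mod_cast hm2.symm)] <;>
      linarith
  have hmhull : toR ((m1, m2) : ℤ × ℤ) ∈ hullR Q := by
    rw [htoRm]
    exact (convex_hullR Q) hphull hqhull (by norm_num) (by norm_num) (by norm_num)
  have hmseg : toR ((m1, m2) : ℤ × ℤ) ∈ openSegment ℝ (toR p) (toR q) :=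
    ⟨1/2, 1/2, by norm_num, by norm_num, by norm_num, htoRm.symm⟩
  -- neither p nor q can be w
  have hpnw : p ≠ w := by
    rintro rfl
    have hqQ : q ∈ Q := by
      rcases Finset.mem_insert.mp hq with rfl | hmem
      · exact absurd rfl hpq
      · exact hmem
    have hint : toR ((m1, m2) : ℤ × ℤ) ∈ interior (hullR Q) := by
      apply (convex_hullR Q).openSegment_interior_closure_subset_interior hwint
        (by rw [(isClosed_hullR Q).closure_eq]; exact hqhull) hmseg
    have := hone _ hint
    have e1 := congrArg Prod.fst this
    have e2 := congrArg Prod.snd this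
    simp only at e1 e2
    have hqw : q = p := by refine Prod.ext ?_ ?_ <;> omega
    exact hpq hqw.symm
  have hqnw : q ≠ w := by
    rintro rfl
    have hpQ : p ∈ Q := by
      rcases Finset.mem_insert.mp hp with rfl | hmem
      · exact absurd rfl hpnw
      · exact hmem
    have hmseg' : toR ((m1, m2) : ℤ × ℤ) ∈ openSegment ℝ (toR q) (toR p) :=
      ⟨1/2, 1/2, by norm_num, by norm_num, by norm_num, by rw [htoRm]; module⟩
    have hint : toR ((m1, m2) : ℤ × ℤ) ∈ interior (hullR Q) := by
      apply (convex_hullR Q).openSegment_interior_closure_subset_interior hwint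
        (by rw [(isClosed_hullR Q).closure_eq]; exact hphull) hmseg'
    have := hone _ hint
    have e1 := congrArg Prod.fst this
    have e2 := congrArg Prod.snd this
    simp only at e1 e2
    have hqw : p = q := by refine Prod.ext ?_ ?_ <;> omega
    exact hpq hqw
  have hpQ : p ∈ Q := by
    rcases Finset.mem_insert.mp hp with rfl | hmem
    · exact absurd rfl hpnw
    · exact hmem
  have hqQ : q ∈ Q := by
    rcases Finset.mem_insert.mp hq with rfl | hmem
    · exact absurd rfl hqnw
    · exact hmem
  -- the midpoint is w
  have hmw : ((m1, m2) : ℤ × ℤ) = w := by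
    rcases hlat _ hmhull with hmQ | hmw
    · exfalso
      have hex := (mem_extremePoints.mp (hext _ hmQ)).2 _ hphull _ hqhull hmseg
      have := (toR_inj hex.1).trans (toR_inj hex.2).symm
      exact hpq this
    · exact hmw
  have hw1 : p.1 + q.1 = 2 * w.1 := by
    have := congrArg Prod.fst hmw; simp only at this; omega
  have hw2 : p.2 + q.2 = 2 * w.2 := by
    have := congrArg Prod.snd hmw; simp only at this; omega
  -- extract the other two vertices
  have hq' : q ∈ Q.erase p := Finset.mem_erase.mpr ⟨fun hc => hpq hc.symm, hqQ⟩
  have hcard2 : ((Q.erase p).erase q).card = 2 := by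
    rw [Finset.card_erase_of_mem hq', Finset.card_erase_of_mem hpQ, hcard]
  obtain ⟨r, s', hrsne, hrs⟩ := Finset.card_eq_two.mp hcard2
  have hrmem : r ∈ (Q.erase p).erase q := by rw [hrs]; simp
  have hsmem : s' ∈ (Q.erase p).erase q := by rw [hrs]; simp
  have hrQ : r ∈ Q := Finset.mem_of_mem_erase (Finset.mem_of_mem_erase hrmem)
  have hsQ : s' ∈ Q := Finset.mem_of_mem_erase (Finset.mem_of_mem_erase hsmem)
  have hrnp : r ≠ p := Finset.ne_of_mem_erase (Finset.mem_of_mem_erase hrmem)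
  have hrnq : r ≠ q := Finset.ne_of_mem_erase hrmem
  have hsnp : s' ≠ p := Finset.ne_of_mem_erase (Finset.mem_of_mem_erase hsmem)
  have hsnq : s' ≠ q := Finset.ne_of_mem_erase hsmem
  have hQeq : Q = insert p (insert q {r, s'}) := by
    apply Finset.ext
    intro x
    simp only [Finset.mem_insert, Finset.mem_singleton]
    constructor
    · intro hx
      by_cases h1 : x = p
      · tauto
      by_cases h2 : x = q
      · tauto
      have : x ∈ (Q.erase p).erase q :=
        Finset.mem_erase.mpr ⟨h2, Finset.mem_erase.mpr ⟨h1, hx⟩⟩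
      rw [hrs] at this
      simp only [Finset.mem_insert, Finset.mem_singleton] at this
      tauto
    · rintro (rfl | rfl | rfl | rfl) <;> assumption
  -- direction vectors
  obtain ⟨u, hu⟩ : ∃ u : ℤ × ℤ, w + u = p :=
    ⟨p - w, by refine Prod.ext ?_ ?_ <;> simp [Prod.fst_sub, Prod.snd_sub]⟩
  obtain ⟨a, ha⟩ : ∃ a : ℤ × ℤ, w + a = r :=
    ⟨r - w, by refine Prod.ext ?_ ?_ <;> simp [Prod.fst_sub, Prod.snd_sub]⟩
  obtain ⟨b, hb⟩ : ∃ b : ℤ × ℤ, w + b = s' :=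
    ⟨s' - w, by refine Prod.ext ?_ ?_ <;> simp [Prod.fst_sub, Prod.snd_sub]⟩
  have hu1 : p.1 = w.1 + u.1 := by have := congrArg Prod.fst hu; simp only [Prod.fst_add, Prod.snd_add] at this; omega
  have hu2 : p.2 = w.2 + u.2 := by have := congrArg Prod.snd hu; simp only [Prod.fst_add, Prod.snd_add] at this; omega
  have hq1 : q.1 = w.1 - u.1 := by omega
  have hq2 : q.2 = w.2 - u.2 := by omega
  have hr1 : r.1 = w.1 + a.1 := by have := congrArg Prod.fst ha; simp only [Prod.fst_add, Prod.snd_add] at this; omega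
  have hr2 : r.2 = w.2 + a.2 := by have := congrArg Prod.snd ha; simp only [Prod.fst_add, Prod.snd_add] at this; omega
  have hs1 : s'.1 = w.1 + b.1 := by have := congrArg Prod.fst hb; simp only [Prod.fst_add, Prod.snd_add] at this; omega
  have hs2 : s'.2 = w.2 + b.2 := by have := congrArg Prod.snd hb; simp only [Prod.fst_add, Prod.snd_add] at this; omega
  have hnu : w + (-u) = q := by
    refine Prod.ext ?_ ?_ <;> simp only [Prod.fst_add, Prod.snd_add, Prod.fst_neg, Prod.snd_neg] <;> omega
  have hmemu : w + u ∈ Q := by rw [hu]; exact hpQ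
  have hmemnu : w + (-u) ∈ Q := by rw [hnu]; exact hqQ
  have hmema : w + a ∈ Q := by rw [ha]; exact hrQ
  have hmemb : w + b ∈ Q := by rw [hb]; exact hsQ
  obtain ⟨hu0, hupr⟩ := vertex_primitive hwint hone hext hmemu
  obtain ⟨ha0, hapr⟩ := vertex_primitive hwint hone hext hmema
  obtain ⟨hb0, hbpr⟩ := vertex_primitive hwint hone hext hmemb
  -- a, b are not ±u
  have hanu : a ≠ u := fun hc => hrnp (by rw [← ha, ← hu, hc])
  have hannu : a ≠ -u := fun hc => hrnq (by rw [← ha, ← hnu, hc])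
  have hbnu : b ≠ u := fun hc => hsnp (by rw [← hb, ← hu, hc])
  have hbnnu : b ≠ -u := fun hc => hsnq (by rw [← hb, ← hnu, hc])
  have hbna : b ≠ a := fun hc => hrsne.symm (by rw [← hb, ← ha, hc])
  have hnupr : Int.gcd (-u).1 (-u).2 = 1 := by
    simp only [Prod.fst_neg, Prod.snd_neg, Int.gcd]
    simpa [Int.gcd] using hupr
  -- determinants with u are ±1
  have hdua : u.1 * a.2 - u.2 * a.1 ≠ 0 := by
    intro h0
    exact hannu (dep_neg hupr hapr h0 hanu)
  have hdub : u.1 * b.2 - u.2 * b.1 ≠ 0 := by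
    intro h0
    exact hbnnu (dep_neg hupr hbpr h0 hbnu)
  have hε1 := det_pm_one hwint hext hlat hmemu hmema hupr hapr hdua
  have hε2 := det_pm_one hwint hext hlat hmemu hmemb hupr hbpr hdub
  have hsq : (u.1 * a.2 - u.2 * a.1) * (u.1 * a.2 - u.2 * a.1) = 1 := by
    rcases hε1 with h | h <;> rw [h] <;> norm_num
  by_cases hdep : a.1 * b.2 - a.2 * b.1 = 0
  · -- Q2 case : b = -a, centrally symmetric
    right
    have hba : b = -a := dep_neg hapr hbpr hdep hbna
    have hbc1 : b.1 = -a.1 := by rw [hba, Prod.fst_neg]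
    have hbc2 : b.2 = -a.2 := by rw [hba, Prod.snd_neg]
    have hs1' : s'.1 = w.1 - a.1 := by omega
    have hs2' : s'.2 = w.2 - a.2 := by omega
    refine ⟨fun z => ((-((u.1 * a.2 - u.2 * a.1) * u.2)) * z.1 + ((u.1 * a.2 - u.2 * a.1) * u.1) * z.2 + ((u.1 * a.2 - u.2 * a.1) * u.2 * w.1 - (u.1 * a.2 - u.2 * a.1) * u.1 * w.2),
        ((u.1 * a.2 - u.2 * a.1) * a.2) * z.1 + (-((u.1 * a.2 - u.2 * a.1) * a.1)) * z.2 + ((u.1 * a.2 - u.2 * a.1) * a.1 * w.2 - (u.1 * a.2 - u.2 * a.1) * a.2 * w.1 + 1)), ?_, ?_⟩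
    · refine ⟨-((u.1 * a.2 - u.2 * a.1) * u.2), (u.1 * a.2 - u.2 * a.1) * u.1, (u.1 * a.2 - u.2 * a.1) * a.2, -((u.1 * a.2 - u.2 * a.1) * a.1),
        (u.1 * a.2 - u.2 * a.1) * u.2 * w.1 - (u.1 * a.2 - u.2 * a.1) * u.1 * w.2, (u.1 * a.2 - u.2 * a.1) * a.1 * w.2 - (u.1 * a.2 - u.2 * a.1) * a.2 * w.1 + 1, ?_, fun z => rfl⟩
      have hdt : -((u.1 * a.2 - u.2 * a.1) * u.2) * (-((u.1 * a.2 - u.2 * a.1) * a.1)) - (u.1 * a.2 - u.2 * a.1) * u.1 * ((u.1 * a.2 - u.2 * a.1) * a.2) = -(u.1 * a.2 - u.2 * a.1) := by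
        linear_combination (-(u.1 * a.2 - u.2 * a.1)) * hsq
      rcases hε1 with h | h
      · right; rw [hdt, h]
      · left; rw [hdt, h]; norm_num
    · rw [hQeq]
      simp only [Finset.image_insert, Finset.image_singleton]
      have hTp : ((-((u.1 * a.2 - u.2 * a.1) * u.2)) * p.1 + ((u.1 * a.2 - u.2 * a.1) * u.1) * p.2 + ((u.1 * a.2 - u.2 * a.1) * u.2 * w.1 - (u.1 * a.2 - u.2 * a.1) * u.1 * w.2),
          ((u.1 * a.2 - u.2 * a.1) * a.2) * p.1 + (-((u.1 * a.2 - u.2 * a.1) * a.1)) * p.2 + ((u.1 * a.2 - u.2 * a.1) * a.1 * w.2 - (u.1 * a.2 - u.2 * a.1) * a.2 * w.1 + 1))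
          = ((0 : ℤ), (2 : ℤ)) := by
        refine Prod.ext ?_ ?_ <;> simp only
        · linear_combination (-((u.1 * a.2 - u.2 * a.1) * u.2)) * hu1 + ((u.1 * a.2 - u.2 * a.1) * u.1) * hu2
        · linear_combination ((u.1 * a.2 - u.2 * a.1) * a.2) * hu1 + (-((u.1 * a.2 - u.2 * a.1) * a.1)) * hu2 + hsq
      have hTq : ((-((u.1 * a.2 - u.2 * a.1) * u.2)) * q.1 + ((u.1 * a.2 - u.2 * a.1) * u.1) * q.2 + ((u.1 * a.2 - u.2 * a.1) * u.2 * w.1 - (u.1 * a.2 - u.2 * a.1) * u.1 * w.2),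
          ((u.1 * a.2 - u.2 * a.1) * a.2) * q.1 + (-((u.1 * a.2 - u.2 * a.1) * a.1)) * q.2 + ((u.1 * a.2 - u.2 * a.1) * a.1 * w.2 - (u.1 * a.2 - u.2 * a.1) * a.2 * w.1 + 1))
          = ((0 : ℤ), (0 : ℤ)) := by
        refine Prod.ext ?_ ?_ <;> simp only
        · linear_combination (-((u.1 * a.2 - u.2 * a.1) * u.2)) * hq1 + ((u.1 * a.2 - u.2 * a.1) * u.1) * hq2
        · linear_combination ((u.1 * a.2 - u.2 * a.1) * a.2) * hq1 + (-((u.1 * a.2 - u.2 * a.1) * a.1)) * hq2 - hsq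
      have hTr : ((-((u.1 * a.2 - u.2 * a.1) * u.2)) * r.1 + ((u.1 * a.2 - u.2 * a.1) * u.1) * r.2 + ((u.1 * a.2 - u.2 * a.1) * u.2 * w.1 - (u.1 * a.2 - u.2 * a.1) * u.1 * w.2),
          ((u.1 * a.2 - u.2 * a.1) * a.2) * r.1 + (-((u.1 * a.2 - u.2 * a.1) * a.1)) * r.2 + ((u.1 * a.2 - u.2 * a.1) * a.1 * w.2 - (u.1 * a.2 - u.2 * a.1) * a.2 * w.1 + 1))
          = ((1 : ℤ), (1 : ℤ)) := by
        refine Prod.ext ?_ ?_ <;> simp only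
        · linear_combination (-((u.1 * a.2 - u.2 * a.1) * u.2)) * hr1 + ((u.1 * a.2 - u.2 * a.1) * u.1) * hr2 + hsq
        · linear_combination ((u.1 * a.2 - u.2 * a.1) * a.2) * hr1 + (-((u.1 * a.2 - u.2 * a.1) * a.1)) * hr2
      have hTs : ((-((u.1 * a.2 - u.2 * a.1) * u.2)) * s'.1 + ((u.1 * a.2 - u.2 * a.1) * u.1) * s'.2 + ((u.1 * a.2 - u.2 * a.1) * u.2 * w.1 - (u.1 * a.2 - u.2 * a.1) * u.1 * w.2),
          ((u.1 * a.2 - u.2 * a.1) * a.2) * s'.1 + (-((u.1 * a.2 - u.2 * a.1) * a.1)) * s'.2 + ((u.1 * a.2 - u.2 * a.1) * a.1 * w.2 - (u.1 * a.2 - u.2 * a.1) * a.2 * w.1 + 1))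
          = ((-1 : ℤ), (1 : ℤ)) := by
        refine Prod.ext ?_ ?_ <;> simp only
        · linear_combination (-((u.1 * a.2 - u.2 * a.1) * u.2)) * hs1' + ((u.1 * a.2 - u.2 * a.1) * u.1) * hs2' - hsq
        · linear_combination ((u.1 * a.2 - u.2 * a.1) * a.2) * hs1' + (-((u.1 * a.2 - u.2 * a.1) * a.1)) * hs2'
      rw [hTp, hTq, hTr, hTs]
      decide
  · -- Q1 case
    left
    have hε3 := det_pm_one hwint hext hlat hmema hmemb hapr hbpr hdep
    have hFsq : (a.1 * b.2 - a.2 * b.1) * (a.1 * b.2 - a.2 * b.1) = 1 := by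
      rcases hε3 with h | h <;> rw [h] <;> norm_num
    have hneq : ¬(u.1 * b.2 - u.2 * b.1 = u.1 * a.2 - u.2 * a.1) := by
      intro heq
      have hERnz : (((u.1 * a.2 - u.2 * a.1) : ℤ) : ℝ) ≠ 0 := by
        rcases hε1 with h | h <;> rw [h] <;> norm_num
      have hune : (u.1 : ℝ) ≠ 0 ∨ (u.2 : ℝ) ≠ 0 := by
        rcases (show u.1 ≠ 0 ∨ u.2 ≠ 0 by
          by_contra hc; push_neg at hc; exact hu0 (Prod.ext hc.1 hc.2)) with h | h
        · left; exact_mod_cast h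
        · right; exact_mod_cast h
      have hkill := not_mem_interior_of_affine_le
        (-((((u.1 * a.2 - u.2 * a.1) : ℤ) : ℝ) * (u.2:ℝ))) ((((u.1 * a.2 - u.2 * a.1) : ℤ) : ℝ) * (u.1:ℝ))
        ((((u.1 * a.2 - u.2 * a.1) : ℤ) : ℝ) * ((u.2:ℝ) * (w.1:ℝ) - (u.1:ℝ) * (w.2:ℝ)))
        (by
          rcases hune with h | h
          · right; exact mul_ne_zero hERnz h
          · left; simp only [neg_ne_zero]; exact mul_ne_zero hERnz h)
        (s := hullR Q) ?_ (x := toR w) ?_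
      · exact hkill hwint
      · intro y hy
        have hy' : y ∈ convexHull ℝ (toR '' ↑Q) := hy
        have hsub : convexHull ℝ (toR '' ↑Q) ⊆
            {v : ℝ × ℝ | 0 ≤ -((((u.1 * a.2 - u.2 * a.1) : ℤ) : ℝ) * (u.2:ℝ)) * v.1
              + (((u.1 * a.2 - u.2 * a.1) : ℤ) : ℝ) * (u.1:ℝ) * v.2
              + (((u.1 * a.2 - u.2 * a.1) : ℤ) : ℝ) * ((u.2:ℝ) * (w.1:ℝ) - (u.1:ℝ) * (w.2:ℝ))} := by
          apply convexHull_min _ (convex_halfplane _ _ _)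
          rintro _ ⟨x, hx, rfl⟩
          rw [hQeq] at hx
          simp only [Finset.coe_insert, Set.mem_insert_iff, Finset.coe_singleton,
            Set.mem_singleton_iff] at hx
          rcases hx with hxe | hxe | hxe | hxe <;> rw [hxe]
          · show (0:ℝ) ≤ _
            simp only [toR]
            have e1 : (p.1 : ℝ) = (w.1:ℝ) + (u.1:ℝ) := by exact_mod_cast hu1
            have e2 : (p.2 : ℝ) = (w.2:ℝ) + (u.2:ℝ) := by exact_mod_cast hu2
            rw [e1, e2]
            exact le_of_eq (by ring)
          · show (0:ℝ) ≤ _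
            simp only [toR]
            have e1 : (q.1 : ℝ) = (w.1:ℝ) - (u.1:ℝ) := by exact_mod_cast hq1
            have e2 : (q.2 : ℝ) = (w.2:ℝ) - (u.2:ℝ) := by exact_mod_cast hq2
            rw [e1, e2]
            exact le_of_eq (by ring)
          · show (0:ℝ) ≤ _
            simp only [toR]
            have e1 : (r.1 : ℝ) = (w.1:ℝ) + (a.1:ℝ) := by exact_mod_cast hr1
            have e2 : (r.2 : ℝ) = (w.2:ℝ) + (a.2:ℝ) := by exact_mod_cast hr2
            rw [e1, e2]
            have hval : -((((u.1 * a.2 - u.2 * a.1) : ℤ) : ℝ) * (u.2:ℝ)) * ((w.1:ℝ) + (a.1:ℝ))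
                + (((u.1 * a.2 - u.2 * a.1) : ℤ) : ℝ) * (u.1:ℝ) * ((w.2:ℝ) + (a.2:ℝ))
                + (((u.1 * a.2 - u.2 * a.1) : ℤ) : ℝ) * ((u.2:ℝ) * (w.1:ℝ) - (u.1:ℝ) * (w.2:ℝ))
                = (((u.1 * a.2 - u.2 * a.1) : ℤ) : ℝ) * (((u.1 * a.2 - u.2 * a.1) : ℤ) : ℝ) := by
              push_cast
              ring
            rw [hval]
            exact mul_self_nonneg _
          · show (0:ℝ) ≤ _
            simp only [toR]
            have e1 : (s'.1 : ℝ) = (w.1:ℝ) + (b.1:ℝ) := by exact_mod_cast hs1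
            have e2 : (s'.2 : ℝ) = (w.2:ℝ) + (b.2:ℝ) := by exact_mod_cast hs2
            rw [e1, e2]
            have hval : -((((u.1 * a.2 - u.2 * a.1) : ℤ) : ℝ) * (u.2:ℝ)) * ((w.1:ℝ) + (b.1:ℝ))
                + (((u.1 * a.2 - u.2 * a.1) : ℤ) : ℝ) * (u.1:ℝ) * ((w.2:ℝ) + (b.2:ℝ))
                + (((u.1 * a.2 - u.2 * a.1) : ℤ) : ℝ) * ((u.2:ℝ) * (w.1:ℝ) - (u.1:ℝ) * (w.2:ℝ))
                = (((u.1 * a.2 - u.2 * a.1) : ℤ) : ℝ) * (((u.1 * b.2 - u.2 * b.1 : ℤ)) : ℝ) := by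
              push_cast
              ring
            rw [hval]
            have : ((u.1 * b.2 - u.2 * b.1 : ℤ) : ℝ) = (((u.1 * a.2 - u.2 * a.1) : ℤ) : ℝ) := by
              exact_mod_cast congrArg (Int.cast : ℤ → ℝ) heq
            rw [this]
            exact mul_self_nonneg _
        exact hsub hy
      · simp only [toR]
        ring
    have hforce : u.1 * b.2 - u.2 * b.1 = -(u.1 * a.2 - u.2 * a.1) := by
      rcases hε2 with h2 | h2 <;> rcases hε1 with h1 | h1
      · exact absurd (h2.trans h1.symm) hneq
      · simp [h2, h1]
      · simp [h2, h1]
      · exact absurd (h2.trans h1.symm) hneq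
    refine ⟨fun z => (((u.1 * a.2 - u.2 * a.1) * u.2) * z.1 + (-((u.1 * a.2 - u.2 * a.1) * u.1)) * z.2 + ((u.1 * a.2 - u.2 * a.1) * u.1 * w.2 - (u.1 * a.2 - u.2 * a.1) * u.2 * w.1 + 1),
        ((a.1 * b.2 - a.2 * b.1) * a.2) * z.1 + (-((a.1 * b.2 - a.2 * b.1) * a.1)) * z.2 + ((a.1 * b.2 - a.2 * b.1) * a.1 * w.2 - (a.1 * b.2 - a.2 * b.1) * a.2 * w.1 + 1)), ?_, ?_⟩
    · refine ⟨(u.1 * a.2 - u.2 * a.1) * u.2, -((u.1 * a.2 - u.2 * a.1) * u.1), (a.1 * b.2 - a.2 * b.1) * a.2, -((a.1 * b.2 - a.2 * b.1) * a.1),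
        (u.1 * a.2 - u.2 * a.1) * u.1 * w.2 - (u.1 * a.2 - u.2 * a.1) * u.2 * w.1 + 1, (a.1 * b.2 - a.2 * b.1) * a.1 * w.2 - (a.1 * b.2 - a.2 * b.1) * a.2 * w.1 + 1, ?_, fun z => rfl⟩
      have hdt : (u.1 * a.2 - u.2 * a.1) * u.2 * (-((a.1 * b.2 - a.2 * b.1) * a.1)) - (-((u.1 * a.2 - u.2 * a.1) * u.1)) * ((a.1 * b.2 - a.2 * b.1) * a.2) = (a.1 * b.2 - a.2 * b.1) := by
        linear_combination (a.1 * b.2 - a.2 * b.1) * hsq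
      rcases hε3 with h | h
      · left; rw [hdt, h]
      · right; rw [hdt, h]
    · rw [hQeq]
      simp only [Finset.image_insert, Finset.image_singleton]
      have hTp : (((u.1 * a.2 - u.2 * a.1) * u.2) * p.1 + (-((u.1 * a.2 - u.2 * a.1) * u.1)) * p.2 + ((u.1 * a.2 - u.2 * a.1) * u.1 * w.2 - (u.1 * a.2 - u.2 * a.1) * u.2 * w.1 + 1),
          ((a.1 * b.2 - a.2 * b.1) * a.2) * p.1 + (-((a.1 * b.2 - a.2 * b.1) * a.1)) * p.2 + ((a.1 * b.2 - a.2 * b.1) * a.1 * w.2 - (a.1 * b.2 - a.2 * b.1) * a.2 * w.1 + 1))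
          = ((1 : ℤ), (a.1 * b.2 - a.2 * b.1) * (u.1 * a.2 - u.2 * a.1) + 1) := by
        refine Prod.ext ?_ ?_ <;> simp only
        · linear_combination ((u.1 * a.2 - u.2 * a.1) * u.2) * hu1 + (-((u.1 * a.2 - u.2 * a.1) * u.1)) * hu2
        · linear_combination ((a.1 * b.2 - a.2 * b.1) * a.2) * hu1 + (-((a.1 * b.2 - a.2 * b.1) * a.1)) * hu2
      have hTq : (((u.1 * a.2 - u.2 * a.1) * u.2) * q.1 + (-((u.1 * a.2 - u.2 * a.1) * u.1)) * q.2 + ((u.1 * a.2 - u.2 * a.1) * u.1 * w.2 - (u.1 * a.2 - u.2 * a.1) * u.2 * w.1 + 1),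
          ((a.1 * b.2 - a.2 * b.1) * a.2) * q.1 + (-((a.1 * b.2 - a.2 * b.1) * a.1)) * q.2 + ((a.1 * b.2 - a.2 * b.1) * a.1 * w.2 - (a.1 * b.2 - a.2 * b.1) * a.2 * w.1 + 1))
          = ((1 : ℤ), 1 - (a.1 * b.2 - a.2 * b.1) * (u.1 * a.2 - u.2 * a.1)) := by
        refine Prod.ext ?_ ?_ <;> simp only
        · linear_combination ((u.1 * a.2 - u.2 * a.1) * u.2) * hq1 + (-((u.1 * a.2 - u.2 * a.1) * u.1)) * hq2
        · linear_combination ((a.1 * b.2 - a.2 * b.1) * a.2) * hq1 + (-((a.1 * b.2 - a.2 * b.1) * a.1)) * hq2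
      have hTr : (((u.1 * a.2 - u.2 * a.1) * u.2) * r.1 + (-((u.1 * a.2 - u.2 * a.1) * u.1)) * r.2 + ((u.1 * a.2 - u.2 * a.1) * u.1 * w.2 - (u.1 * a.2 - u.2 * a.1) * u.2 * w.1 + 1),
          ((a.1 * b.2 - a.2 * b.1) * a.2) * r.1 + (-((a.1 * b.2 - a.2 * b.1) * a.1)) * r.2 + ((a.1 * b.2 - a.2 * b.1) * a.1 * w.2 - (a.1 * b.2 - a.2 * b.1) * a.2 * w.1 + 1))
          = ((0 : ℤ), (1 : ℤ)) := by
        refine Prod.ext ?_ ?_ <;> simp only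
        · linear_combination ((u.1 * a.2 - u.2 * a.1) * u.2) * hr1 + (-((u.1 * a.2 - u.2 * a.1) * u.1)) * hr2 - hsq
        · linear_combination ((a.1 * b.2 - a.2 * b.1) * a.2) * hr1 + (-((a.1 * b.2 - a.2 * b.1) * a.1)) * hr2
      have hTs : (((u.1 * a.2 - u.2 * a.1) * u.2) * s'.1 + (-((u.1 * a.2 - u.2 * a.1) * u.1)) * s'.2 + ((u.1 * a.2 - u.2 * a.1) * u.1 * w.2 - (u.1 * a.2 - u.2 * a.1) * u.2 * w.1 + 1),
          ((a.1 * b.2 - a.2 * b.1) * a.2) * s'.1 + (-((a.1 * b.2 - a.2 * b.1) * a.1)) * s'.2 + ((a.1 * b.2 - a.2 * b.1) * a.1 * w.2 - (a.1 * b.2 - a.2 * b.1) * a.2 * w.1 + 1))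
          = ((2 : ℤ), (0 : ℤ)) := by
        refine Prod.ext ?_ ?_ <;> simp only
        · linear_combination ((u.1 * a.2 - u.2 * a.1) * u.2) * hs1 + (-((u.1 * a.2 - u.2 * a.1) * u.1)) * hs2 + (-(u.1 * a.2 - u.2 * a.1)) * hforce + hsq
        · linear_combination ((a.1 * b.2 - a.2 * b.1) * a.2) * hs1 + (-((a.1 * b.2 - a.2 * b.1) * a.1)) * hs2 - hFsq
      have hEF : (a.1 * b.2 - a.2 * b.1) * (u.1 * a.2 - u.2 * a.1) = 1 ∨ (a.1 * b.2 - a.2 * b.1) * (u.1 * a.2 - u.2 * a.1) = -1 := by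
        rcases hε3 with h3 | h3 <;> rcases hε1 with h1 | h1 <;> rw [h3, h1] <;> norm_num
      rcases hEF with hEF | hEF <;> rw [hEF] at hTp hTq <;> rw [hTp, hTq, hTr, hTs] <;> decide

lemma no_map : ∀ x1 ∈ Q2, ∀ x2 ∈ Q2, ∀ x3 ∈ Q2, ∀ x4 ∈ Q2,
    x4.1 = 2*x3.1 + 2*x2.1 - 3*x1.1 → x4.2 = 2*x3.2 + 2*x2.2 - 3*x1.2 →
    ({x1, x2, x4, x3} : Finset (ℤ × ℤ)) ≠ Q2 := by decide

lemma not_equiv_Q1_Q2 : ¬ LatticeEquiv Q1 Q2 := by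
  rintro ⟨T, ⟨A, B, C, D0, E0, F0, hdet, hform⟩, himg⟩
  have hT1 : T (1,0) = (A + E0, C + F0) := by rw [hform]; norm_num
  have hT2 : T (0,1) = (B + E0, D0 + F0) := by rw [hform]; norm_num
  have hT3 : T (2,0) = (2*A + E0, 2*C + F0) := by
    rw [hform]; norm_num; constructor <;> ring
  have hT4 : T (1,2) = (A + 2*B + E0, C + 2*D0 + F0) := by
    rw [hform]; norm_num; constructor <;> ring
  have himg' : ({(A + E0, C + F0), (B + E0, D0 + F0), (A + 2*B + E0, C + 2*D0 + F0),
      (2*A + E0, 2*C + F0)} : Finset (ℤ × ℤ)) = Q2 := by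
    rw [← himg]
    show _ = Finset.image T Q1
    rw [show Q1 = {((1:ℤ),(0:ℤ)), (0,1), (1,2), (2,0)} from rfl]
    simp only [Finset.image_insert, Finset.image_singleton, hT1, hT2, hT3, hT4]
  have hm1 : ((A + E0, C + F0) : ℤ × ℤ) ∈ Q2 := by rw [← himg']; simp
  have hm2 : ((B + E0, D0 + F0) : ℤ × ℤ) ∈ Q2 := by rw [← himg']; simp
  have hm3 : ((2*A + E0, 2*C + F0) : ℤ × ℤ) ∈ Q2 := by rw [← himg']; simp
  have hm4 : ((A + 2*B + E0, C + 2*D0 + F0) : ℤ × ℤ) ∈ Q2 := by rw [← himg']; simp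
  exact no_map _ hm1 _ hm2 _ hm3 _ hm4 (by ring) (by ring) himg'

/-- up to Aff(ℤ²), Q1 and Q2 are the only lattice quadrangles with exactly
one interior integral point and all edges of lattice length 1. -/
theorem classification_quadrangles_one_interior_point :
    (∀ Q : Finset (ℤ × ℤ),
      IsLatticePolygonPrimitiveEdges Q 4 1 ↔ (LatticeEquiv Q Q1 ∨ LatticeEquiv Q Q2)) ∧
    ¬ LatticeEquiv Q1 Q2 := by
  constructor
  · intro Q
    constructor
    · exact forward_classification
    · rintro (hQ | hQ)
      · obtain ⟨T, hT, himg⟩ := latticeEquiv_symm hQ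
        rw [← himg]
        exact prop_transport hT prop_Q1
      · obtain ⟨T, hT, himg⟩ := latticeEquiv_symm hQ
        rw [← himg]
        exact prop_transport hT prop_Q2
  · exact not_equiv_Q1_Q2
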